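/- arXiv:1906.07648 — 9 statements merged into one kernel-verified Lean document; each statement's English description precedes it below -/
import Mathlib

section
/- If H is a k-uniform hypergraph on n vertices such that for every vertex v the link hypergraph H(v) has a fractional matching of size at least n/k, then H has a fractional matching of size exactly n/k (a perfect fractional matching). -/
open Finset

/-- A fractional matching of the hypergraph on vertex set `V` with edge set `E`:
a weight function `w : E → [0,1]` (extended by `0` off `E`) such that every vertex
has total incident weight at most `1`. -/
def IsFracMatching {V : Type*} [Fintype V] [DecidableEq V]
    (E : Finset (Finset V)) (w : Finset V → ℝ) : Prop :=
  (∀ e, 0 ≤ w e ∧ w e ≤ 1) ∧ (∀ e, e ∉ E → w e = 0) ∧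
    ∀ v : V, ∑ e ∈ Finset.univ.filter (fun e => v ∈ e), w e ≤ 1

/-- helper: sum of a dite over a fintype equals the sum over the subtype. -/
lemma sum_dite_subtype {ι : Type*} [Fintype ι] (P : ι → Prop) [DecidablePred P]
    [Fintype {i // P i}] (f : ∀ i, P i → ℝ) :
    ∑ i : ι, (if h : P i then f i h else 0) = ∑ s : {i // P i}, f s.1 s.2 := by
  rw [← Fintype.sum_subtype_add_sum_subtype P (fun i => if h : P i then f i h else 0)]
  have h1 : ∀ s : {i // P i}, (if h : P s.1 then f s.1 h else 0) = f s.1 s.2 := fun s => by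
    simp [s.2]
  have h2 : ∀ s : {i // ¬ P i}, (if h : P s.1 then f s.1 h else 0) = 0 := fun s => by
    simp [s.2]
  simp only [h1, h2, Finset.sum_const_zero, add_zero]
  congr!

theorem farkas (n : ℕ) : ∀ {ι : Type u} [Fintype ι] (a : ι → Fin n → ℝ) (b : ι → ℝ),
    (¬ ∃ x : Fin n → ℝ, ∀ i, ∑ j, a i j * x j ≤ b i) →
    ∃ y : ι → ℝ, (∀ i, 0 ≤ y i) ∧ (∀ j, ∑ i, y i * a i j = 0) ∧ ∑ i, y i * b i < 0 := by
  induction n with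
  | zero =>
    intro ι _ a b h
    by_cases hb : ∀ i, 0 ≤ b i
    · exact absurd ⟨0, fun i => by simpa using hb i⟩ h
    · push_neg at hb
      obtain ⟨i₀, hi₀⟩ := hb
      classical
      refine ⟨fun i => if i = i₀ then 1 else 0, fun i => by positivity, fun j => j.elim0, ?_⟩
      simp [hi₀]
  | succ n IH =>
    intro ι _ a b h
    classical
    set c : ι → ℝ := fun i => a i (Fin.last n) with hc
    set a' : ι → Fin n → ℝ := fun i j => a i j.castSucc with ha'
    set κ := ({i // c i = 0} ⊕ ({i // 0 < c i} × {i // c i < 0})) with hκ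
    set comb : (ι → ℝ) → κ → ℝ := fun v s => match s with
      | .inl z => v z.1
      | .inr pq => (-(c pq.2.1)) * v pq.1.1 + c pq.1.1 * v pq.2.1 with hcomb
    set A : κ → Fin n → ℝ := fun s j => comb (fun i => a' i j) s with hA
    set B : κ → ℝ := comb b with hB
    -- derived system is infeasible
    have hinf : ¬ ∃ x' : Fin n → ℝ, ∀ s, ∑ j, A s j * x' j ≤ B s := by
      rintro ⟨x', hx'⟩
      apply h
      set S : ι → ℝ := fun i => ∑ j, a' i j * x' j with hS
      have hpair : ∀ (p q : ι), 0 < c p → c q < 0 →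
          (b q - S q) / c q ≤ (b p - S p) / c p := by
        intro p q hp hq
        have h1 := hx' (.inr (⟨p, hp⟩, ⟨q, hq⟩))
        have h2 : (-(c q)) * S p + c p * S q ≤ (-(c q)) * b p + c p * b q := by
          calc (-(c q)) * S p + c p * S q
              = ∑ j, ((-(c q)) * a' p j + c p * a' q j) * x' j := by
                simp only [hS, Finset.mul_sum, ← Finset.sum_add_distrib]
                congr 1; ext j; ring
            _ ≤ (-(c q)) * b p + c p * b q := h1
        have hU : c p * ((b p - S p) / c p) = b p - S p := mul_div_cancel₀ _ (ne_of_gt hp)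
        have hL : c q * ((b q - S q) / c q) = b q - S q := mul_div_cancel₀ _ (ne_of_lt hq)
        nlinarith [mul_pos hp (neg_pos.2 hq)]
      -- choose the value of the last variable
      set N := Finset.univ.filter (fun i => c i < 0) with hN
      set P := Finset.univ.filter (fun i => 0 < c i) with hP
      set L : ι → ℝ := fun q => (b q - S q) / c q with hLdef
      set t : ℝ := if hn : N.Nonempty then N.sup' hn L
        else if hp : P.Nonempty then P.inf' hp L else 0 with ht
      have htle : ∀ p, 0 < c p → t ≤ L p := by
        intro p hp
        rcases Classical.em N.Nonempty with hn | hn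
        · rw [ht, dif_pos hn]
          exact Finset.sup'_le hn L fun q hq =>
            hpair p q hp (Finset.mem_filter.1 hq).2
        · have hpn : P.Nonempty := ⟨p, Finset.mem_filter.2 ⟨Finset.mem_univ _, hp⟩⟩
          rw [ht, dif_neg hn, dif_pos hpn]
          exact Finset.inf'_le L (Finset.mem_filter.2 ⟨Finset.mem_univ _, hp⟩)
      have htge : ∀ q, c q < 0 → L q ≤ t := by
        intro q hq
        have hn : N.Nonempty := ⟨q, Finset.mem_filter.2 ⟨Finset.mem_univ _, hq⟩⟩
        rw [ht, dif_pos hn]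
        exact Finset.le_sup' L (Finset.mem_filter.2 ⟨Finset.mem_univ _, hq⟩)
      refine ⟨Fin.snoc (α := fun _ => ℝ) x' t, fun i => ?_⟩
      have hsum : ∑ j, a i j * Fin.snoc (α := fun _ => ℝ) x' t j = S i + c i * t := by
        rw [Fin.sum_univ_castSucc]
        simp [hS, ha', hc]
      rw [hsum]
      rcases lt_trichotomy (c i) 0 with hci | hci | hci
      · have h1 := htge i hci
        have hL2 : c i * L i = b i - S i := mul_div_cancel₀ _ (ne_of_lt hci)
        nlinarith
      · have h1 : S i ≤ b i := hx' (.inl ⟨i, hci⟩)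
        rw [hci, zero_mul, add_zero]
        exact h1
      · have h1 := htle i hci
        have hL2 : c i * L i = b i - S i := mul_div_cancel₀ _ (ne_of_gt hci)
        nlinarith
    obtain ⟨y', hy'0, hy'A, hy'B⟩ := IH A B hinf
    set y : ι → ℝ := fun i =>
      (if h : c i = 0 then y' (.inl ⟨i, h⟩) else 0) +
      ((if h : 0 < c i then ∑ q : {i // c i < 0}, y' (.inr (⟨i, h⟩, q)) * (-(c q.1)) else 0) +
      (if h : c i < 0 then ∑ p : {i // 0 < c i}, y' (.inr (p, ⟨i, h⟩)) * c p.1 else 0)) with hy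
    have hynn : ∀ i, 0 ≤ y i := by
      intro i
      refine add_nonneg ?_ (add_nonneg ?_ ?_)
      · split_ifs with h1
        · exact hy'0 _
        · exact le_refl 0
      · split_ifs with h1
        · exact Finset.sum_nonneg fun q _ =>
            mul_nonneg (hy'0 _) (le_of_lt (neg_pos.2 q.2))
        · exact le_refl 0
      · split_ifs with h1
        · exact Finset.sum_nonneg fun p _ => mul_nonneg (hy'0 _) (le_of_lt p.2)
        · exact le_refl 0
    have key : ∀ v : ι → ℝ, ∑ i, y i * v i = ∑ s : κ, y' s * comb v s := by
      intro v
      have e1 : ∑ i, y i * v i =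
          (∑ i, (if h : c i = 0 then y' (.inl ⟨i, h⟩) * v i else 0)) +
          ((∑ i, (if h : 0 < c i then
              ∑ q : {i // c i < 0}, y' (.inr (⟨i, h⟩, q)) * ((-(c q.1)) * v i) else 0)) +
          (∑ i, (if h : c i < 0 then
              ∑ p : {i // 0 < c i}, y' (.inr (p, ⟨i, h⟩)) * (c p.1 * v i) else 0))) := by
        rw [← Finset.sum_add_distrib, ← Finset.sum_add_distrib]
        refine Finset.sum_congr rfl fun i _ => ?_
        simp only [hy]
        rcases lt_trichotomy (c i) 0 with h0 | h0 | h0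
        · rw [dif_neg (ne_of_lt h0), dif_neg (asymm h0), dif_pos h0,
            dif_neg (ne_of_lt h0), dif_neg (asymm h0), dif_pos h0]
          simp [Finset.sum_mul, mul_assoc]
        · rw [dif_pos h0, dif_neg (by rw [h0]; exact lt_irrefl 0),
            dif_neg (by rw [h0]; exact lt_irrefl 0), dif_pos h0,
            dif_neg (by rw [h0]; exact lt_irrefl 0), dif_neg (by rw [h0]; exact lt_irrefl 0)]
          ring
        · rw [dif_neg (ne_of_gt h0), dif_pos h0, dif_neg (asymm h0),
            dif_neg (ne_of_gt h0), dif_pos h0, dif_neg (asymm h0)]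
          simp [Finset.sum_mul, mul_assoc]
      have rhs : ∑ s : κ, y' s * comb v s =
          (∑ z : {i // c i = 0}, y' (.inl z) * v z.1) +
          ((∑ p : {i // 0 < c i}, ∑ q : {i // c i < 0},
              y' (.inr (p, q)) * ((-(c q.1)) * v p.1)) +
          (∑ p : {i // 0 < c i}, ∑ q : {i // c i < 0},
              y' (.inr (p, q)) * (c p.1 * v q.1))) := by
        rw [Fintype.sum_sum_type, Fintype.sum_prod_type]
        congr 1
        rw [← Finset.sum_add_distrib]
        refine Finset.sum_congr rfl fun p _ => ?_
        rw [← Finset.sum_add_distrib]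
        refine Finset.sum_congr rfl fun q _ => ?_
        show y' (.inr (p, q)) * ((-(c q.1)) * v p.1 + c p.1 * v q.1) = _
        ring
      rw [e1, sum_dite_subtype, sum_dite_subtype, sum_dite_subtype, rhs]
      simp only [Subtype.coe_eta]
      congr 1
      congr 1
      exact Finset.sum_comm
    refine ⟨y, hynn, ?_, ?_⟩
    · intro j
      refine Fin.lastCases ?_ ?_ j
      · rw [key c]
        apply Finset.sum_eq_zero
        rintro (z | ⟨p, q⟩) _
        · simp [hcomb, z.2]
        · show y' (.inr (p, q)) * ((-(c q.1)) * c p.1 + c p.1 * c q.1) = 0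
          ring
      · intro j'
        have h2 : ∑ s : κ, y' s * comb (fun i => a' i j') s = 0 := hy'A j'
        exact (key (fun i => a' i j')).trans h2
    · exact (key b).trans_lt hy'B

lemma cover_lemma {V : Type*} [Fintype V] [DecidableEq V] (k : ℕ) (E : Finset (Finset V))
    (hk : 0 < k) (hV : 0 < Fintype.card V)
    (hunif : ∀ e ∈ E, e.card = k)
    (hlink : ∀ v : V, ∃ w : Finset V → ℝ,
      IsFracMatching ((E.filter (fun e => v ∈ e)).image (fun e => e.erase v)) w ∧
        (Fintype.card V : ℝ) / k ≤ ∑ e : Finset V, w e)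
    (t : V → ℝ) (ht0 : ∀ v, 0 ≤ t v) (htc : ∀ e ∈ E, 1 ≤ ∑ v ∈ e, t v) :
    (Fintype.card V : ℝ) / k ≤ ∑ v, t v := by
  classical
  by_contra hS
  push_neg at hS
  set K : ℝ := (k : ℝ) with hKdef
  have hK : (0:ℝ) < K := by rw [hKdef]; exact_mod_cast hk
  set nn : ℝ := (Fintype.card V : ℝ) with hnn
  have hn : (0:ℝ) < nn := by rw [hnn]; exact_mod_cast hV
  set β : ℝ := nn / K with hβ
  have hβK : β * K = nn := div_mul_cancel₀ _ (ne_of_gt hK)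
  have : Nonempty V := Fintype.card_pos_iff.mp hV
  obtain ⟨v₀, -, hv₀⟩ := Finset.exists_min_image Finset.univ t Finset.univ_nonempty
  set m : ℝ := t v₀ with hm
  have hmle : ∀ u : V, m ≤ t u := fun u => hv₀ u (Finset.mem_univ u)
  have hm0 : 0 ≤ m := ht0 v₀
  have hnm : nn * m ≤ ∑ v, t v := by
    calc nn * m = ∑ _v : V, m := by simp [hnn, mul_comm]
    _ ≤ ∑ v, t v := Finset.sum_le_sum fun v _ => hmle v
  set S : ℝ := ∑ v, t v with hSdef
  have hD : 0 < 1 - K * m := by nlinarith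
  set D : ℝ := 1 - K * m with hDdef
  set t'' : V → ℝ := fun u => (t u - m) / D with ht''
  have ht''0 : ∀ u, 0 ≤ t'' u := fun u =>
    div_nonneg (sub_nonneg.2 (hmle u)) hD.le
  obtain ⟨w₀, ⟨hw01, hw00, hw0deg⟩, hw0S⟩ := hlink v₀
  -- w₀ is nonnegative
  have hw0nn : ∀ f, 0 ≤ w₀ f := fun f => (hw01 f).1
  -- t'' covers the link of v₀
  have hcov : ∀ f ∈ (E.filter (fun e => v₀ ∈ e)).image (fun e => e.erase v₀),
      1 ≤ ∑ u ∈ f, t'' u := by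
    intro f hf
    obtain ⟨e, he, rfl⟩ := Finset.mem_image.1 hf
    obtain ⟨heE, hev₀⟩ := Finset.mem_filter.1 he
    have hcard : e.card = k := hunif e heE
    have hcarde : (e.erase v₀).card = k - 1 := by rw [Finset.card_erase_of_mem hev₀, hcard]
    have hsplit : ∑ u ∈ e.erase v₀, t u = (∑ u ∈ e, t u) - m := by
      rw [hm, ← Finset.add_sum_erase e t hev₀]; ring
    have h1 : 1 - m ≤ ∑ u ∈ e.erase v₀, t u := by
      rw [hsplit]
      have := htc e heE
      linarith
    have hsum'' : ∑ u ∈ e.erase v₀, t'' u =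
        ((∑ u ∈ e.erase v₀, t u) - ((k:ℝ) - 1) * m) / D := by
      rw [ht'']
      rw [← Finset.sum_div]
      congr 1
      rw [Finset.sum_sub_distrib, Finset.sum_const, hcarde]
      have : ((k - 1 : ℕ) : ℝ) = (k:ℝ) - 1 := by
        rw [Nat.cast_sub hk]
        simp
      rw [nsmul_eq_mul, this]
    rw [hsum'', le_div_iff₀ hD]
    have := h1
    simp only [hDdef, hKdef]
    nlinarith
  -- weak duality
  set Sw : ℝ := ∑ f : Finset V, w₀ f with hSw
  have hstep1 : Sw ≤ ∑ f : Finset V, w₀ f * ∑ u ∈ f, t'' u := by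
    apply Finset.sum_le_sum
    intro f _
    by_cases hf : f ∈ (E.filter (fun e => v₀ ∈ e)).image (fun e => e.erase v₀)
    · exact le_mul_of_one_le_right (hw0nn f) (hcov f hf)
    · rw [hw00 f hf]; simp
  have hswap : ∑ f : Finset V, w₀ f * ∑ u ∈ f, t'' u =
      ∑ u : V, t'' u * ∑ f ∈ Finset.univ.filter (fun f => u ∈ f), w₀ f := by
    have e1 : ∀ f : Finset V, w₀ f * ∑ u ∈ f, t'' u =
        ∑ u : V, (if u ∈ f then w₀ f * t'' u else 0) := by
      intro f
      rw [Finset.mul_sum, ← Finset.sum_filter]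
      apply Finset.sum_congr
      · ext u; simp
      · intro u _; rfl
    rw [Finset.sum_congr rfl fun f _ => e1 f, Finset.sum_comm]
    apply Finset.sum_congr rfl
    intro u _
    rw [Finset.mul_sum, ← Finset.sum_filter]
    apply Finset.sum_congr rfl
    intro f _; ring
  have hstep2 : ∑ u : V, t'' u * ∑ f ∈ Finset.univ.filter (fun f => u ∈ f), w₀ f
      ≤ ∑ u : V, t'' u := by
    apply Finset.sum_le_sum
    intro u _
    calc t'' u * ∑ f ∈ Finset.univ.filter (fun f => u ∈ f), w₀ f
        ≤ t'' u * 1 := mul_le_mul_of_nonneg_left (hw0deg u) (ht''0 u)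
      _ = t'' u := mul_one _
  have hT : ∑ u : V, t'' u = (S - nn * m) / D := by
    rw [ht'', ← Finset.sum_div]
    congr 1
    rw [Finset.sum_sub_distrib, Finset.sum_const, nsmul_eq_mul]
    rw [Finset.card_univ, hSdef, hnn]
  have hfinal : β ≤ (S - nn * m) / D := by
    rw [← hT]
    calc β ≤ Sw := hw0S
      _ ≤ _ := hstep1.trans (hswap.le.trans hstep2)
  rw [le_div_iff₀ hD] at hfinal
  nlinarith

/-- If `H` is a `k`-uniform hypergraph on `n` vertices such that for every vertex `v` the
link hypergraph `H(v)` has a fractional matching of size at least `n/k`, then `H` has a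
fractional matching of size exactly `n/k` (a perfect fractional matching). -/
theorem stmt_0 {V : Type*} [Fintype V] [DecidableEq V] (k : ℕ) (E : Finset (Finset V))
    (hunif : ∀ e ∈ E, e.card = k)
    (hlink : ∀ v : V, ∃ w : Finset V → ℝ,
      IsFracMatching ((E.filter (fun e => v ∈ e)).image (fun e => e.erase v)) w ∧
        (Fintype.card V : ℝ) / k ≤ ∑ e : Finset V, w e) :
    ∃ w : Finset V → ℝ, IsFracMatching E w ∧
      ∑ e : Finset V, w e = (Fintype.card V : ℝ) / k := by
  classical
  by_cases hdeg : k = 0 ∨ Fintype.card V = 0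
  · refine ⟨fun _ => 0, ⟨fun e => ⟨le_refl 0, zero_le_one⟩, fun e _ => rfl, fun v => by simp⟩, ?_⟩
    rcases hdeg with h | h <;> simp [h]
  · push_neg at hdeg
    obtain ⟨hk0, hV0⟩ := hdeg
    have hk : 0 < k := Nat.pos_of_ne_zero hk0
    have hV : 0 < Fintype.card V := Nat.pos_of_ne_zero hV0
    have hK : (0:ℝ) < (k:ℝ) := by exact_mod_cast hk
    have hn : (0:ℝ) < (Fintype.card V : ℝ) := by exact_mod_cast hV
    set β : ℝ := (Fintype.card V : ℝ) / k with hβ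
    have hβ0 : 0 < β := div_pos hn hK
    -- Step 1: there is a fractional matching of size at least β
    have hmain : ∃ w : Finset V → ℝ, IsFracMatching E w ∧ β ≤ ∑ e : Finset V, w e := by
      by_contra hno
      push_neg at hno
      set ι := {e : Finset V // e ∈ E} with hι
      set σ : ι ≃ Fin (Fintype.card ι) := Fintype.equivFin ι with hσ
      set N := Fintype.card ι with hN
      set a : (V ⊕ (ι ⊕ Unit)) → Fin N → ℝ := fun s => match s with
        | .inl v => fun j => if v ∈ (σ.symm j).1 then 1 else 0
        | .inr (.inl i) => fun j => if σ.symm j = i then -1 else 0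
        | .inr (.inr _) => fun _ => -1 with ha
      set b : (V ⊕ (ι ⊕ Unit)) → ℝ := fun s => match s with
        | .inl _ => 1
        | .inr (.inl _) => 0
        | .inr (.inr _) => -β with hb
      have hinf : ¬ ∃ x : Fin N → ℝ, ∀ i, ∑ j, a i j * x j ≤ b i := by
        rintro ⟨x, hx⟩
        set xe : ι → ℝ := fun i => x (σ i) with hxe
        have hxe0 : ∀ i : ι, 0 ≤ xe i := by
          intro i
          have h1 : ∑ j, (if σ.symm j = i then (-1:ℝ) else 0) * x j ≤ 0 := hx (.inr (.inl i))
          have h2 : ∑ j, (if σ.symm j = i then (-1:ℝ) else 0) * x j = - xe i := by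
            rw [← Equiv.sum_comp σ (fun j => (if σ.symm j = i then (-1:ℝ) else 0) * x j)]
            simp [Finset.sum_ite_eq, hxe]
            rw [Finset.sum_eq_single i (fun j _ hj => if_neg hj) (fun h => absurd (Finset.mem_univ i) h), if_pos rfl]
          rw [h2] at h1
          linarith
        have hdegc : ∀ v : V, ∑ i : ι, (if v ∈ i.1 then (1:ℝ) else 0) * xe i ≤ 1 := by
          intro v
          have h1 : ∑ j, (if v ∈ (σ.symm j).1 then (1:ℝ) else 0) * x j ≤ 1 := hx (.inl v)
          have h2 : ∑ j, (if v ∈ (σ.symm j).1 then (1:ℝ) else 0) * x j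
              = ∑ i : ι, (if v ∈ i.1 then (1:ℝ) else 0) * xe i := by
            rw [← Equiv.sum_comp σ
              (fun j => (if v ∈ (σ.symm j).1 then (1:ℝ) else 0) * x j)]
            simp [hxe]
          rwa [h2] at h1
        have hsz : β ≤ ∑ i : ι, xe i := by
          have h1 : ∑ j, (-1:ℝ) * x j ≤ -β := hx (.inr (.inr Unit.unit))
          have h2 : ∑ j, (-1:ℝ) * x j = - ∑ i : ι, xe i := by
            rw [← Equiv.sum_comp σ (fun j => (-1:ℝ) * x j)]
            simp [hxe]
          rw [h2] at h1
          linarith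
        set w : Finset V → ℝ := fun e => if h : e ∈ E then xe ⟨e, h⟩ else 0 with hw
        have hwnn : ∀ e, 0 ≤ w e := by
          intro e
          simp only [hw]
          by_cases hE : e ∈ E
          · rw [dif_pos hE]; exact hxe0 _
          · rw [dif_neg hE]
        have hsize : ∑ e : Finset V, w e = ∑ i : ι, xe i := by
          simp only [hw]
          exact sum_dite_subtype (· ∈ E) (fun e h => xe ⟨e, h⟩)
        have hdegw : ∀ v : V, ∑ e ∈ Finset.univ.filter (fun e => v ∈ e), w e ≤ 1 := by
          intro v
          have e1 : ∀ e : Finset V, (if v ∈ e then w e else 0) =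
              (if h : e ∈ E then (if v ∈ e then (1:ℝ) else 0) * xe ⟨e, h⟩ else 0) := by
            intro e
            by_cases hE : e ∈ E
            · rw [dif_pos hE]
              by_cases hv : v ∈ e <;> simp [hw, hE, hv]
            · rw [dif_neg hE]
              by_cases hv : v ∈ e <;> simp [hw, hE, hv]
          calc ∑ e ∈ Finset.univ.filter (fun e => v ∈ e), w e
              = ∑ e : Finset V, (if v ∈ e then w e else 0) := (Finset.sum_filter _ _)
            _ = ∑ e : Finset V, (if h : e ∈ E then (if v ∈ e then (1:ℝ) else 0) * xe ⟨e, h⟩ else 0) :=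
                Finset.sum_congr rfl fun e _ => e1 e
            _ = ∑ i : ι, (if v ∈ i.1 then (1:ℝ) else 0) * xe i :=
                sum_dite_subtype (· ∈ E) (fun e h => (if v ∈ e then (1:ℝ) else 0) * xe ⟨e, h⟩)
            _ ≤ 1 := hdegc v
        have hwle1 : ∀ e, w e ≤ 1 := by
          intro e
          by_cases hE : e ∈ E
          · have hcard : 0 < e.card := by rw [hunif e hE]; exact hk
            obtain ⟨u, hu⟩ := Finset.card_pos.1 hcard
            calc w e ≤ ∑ e' ∈ Finset.univ.filter (fun e' => u ∈ e'), w e' :=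
                  Finset.single_le_sum (fun e' _ => hwnn e')
                    (Finset.mem_filter.2 ⟨Finset.mem_univ _, hu⟩)
              _ ≤ 1 := hdegw u
          · simp only [hw]; rw [dif_neg hE]; exact zero_le_one
        have hwmatch : IsFracMatching E w :=
          ⟨fun e => ⟨hwnn e, hwle1 e⟩, fun e hE => by simp only [hw]; rw [dif_neg hE], hdegw⟩
        have := hno w hwmatch
        rw [hsize] at this
        linarith
      obtain ⟨y, hy0, hyA, hyB⟩ := farkas N a b hinf
      -- extract the dual certificate
      set t : V → ℝ := fun v => y (.inl v) with htdef
      set lam : ℝ := y (.inr (.inr Unit.unit)) with hlam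
      have hedge : ∀ i₀ : ι, ∑ v ∈ i₀.1, t v = y (.inr (.inl i₀)) + lam := by
        intro i₀
        have h0 := hyA (σ i₀)
        rw [Fintype.sum_sum_type, Fintype.sum_sum_type] at h0
        have p1 : ∑ v : V, y (.inl v) * a (.inl v) (σ i₀) = ∑ v ∈ i₀.1, t v := by
          have : ∀ v : V, y (.inl v) * a (.inl v) (σ i₀) =
              (if v ∈ i₀.1 then t v else 0) := by
            intro v
            show y (.inl v) * (if v ∈ (σ.symm (σ i₀)).1 then (1:ℝ) else 0) = _
            rw [Equiv.symm_apply_apply]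
            by_cases hv : v ∈ i₀.1 <;> simp [hv, htdef]
          rw [Finset.sum_congr rfl fun v _ => this v, ← Finset.sum_filter]
          apply Finset.sum_congr
          · ext u; simp
          · intro u _; rfl
        have p2 : ∑ i : ι, y (.inr (.inl i)) * a (.inr (.inl i)) (σ i₀) =
            - y (.inr (.inl i₀)) := by
          have : ∀ i : ι, y (.inr (.inl i)) * a (.inr (.inl i)) (σ i₀) =
              (if i = i₀ then - y (.inr (.inl i)) else 0) := by
            intro i
            show y (.inr (.inl i)) * (if σ.symm (σ i₀) = i then (-1:ℝ) else 0) = _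
            rw [Equiv.symm_apply_apply]
            by_cases hv : i = i₀
            · simp [hv]
            · simp [hv, Ne.symm hv]
          rw [Finset.sum_congr rfl fun i _ => this i, Finset.sum_ite_eq' Finset.univ i₀]
          simp
        have p3 : ∑ u : Unit, y (.inr (.inr u)) * a (.inr (.inr u)) (σ i₀) = - lam := by
          show ∑ u : Unit, y (.inr (.inr u)) * (-1:ℝ) = - lam
          simp [hlam]
        rw [p1, p2, p3] at h0
        linarith
      have hsizec : ∑ v : V, t v < lam * β := by
        have h0 := hyB
        rw [Fintype.sum_sum_type, Fintype.sum_sum_type] at h0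
        have p1 : ∑ v : V, y (.inl v) * b (.inl v) = ∑ v : V, t v := by
          apply Finset.sum_congr rfl
          intro v _
          show y (.inl v) * 1 = t v
          rw [mul_one]
        have p2 : ∑ i : ι, y (.inr (.inl i)) * b (.inr (.inl i)) = 0 := by
          apply Finset.sum_eq_zero
          intro i _
          show y (.inr (.inl i)) * 0 = 0
          rw [mul_zero]
        have p3 : ∑ u : Unit, y (.inr (.inr u)) * b (.inr (.inr u)) = - (lam * β) := by
          show ∑ u : Unit, y (.inr (.inr u)) * (-β) = - (lam * β)
          simp only [Finset.univ_unique, Finset.sum_singleton]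
          show y (.inr (.inr Unit.unit)) * (-β) = _
          rw [hlam]
          ring
        rw [p1, p2, p3] at h0
        linarith
      have hlam0 : 0 ≤ lam := hy0 _
      have htnn : 0 ≤ ∑ v : V, t v := Finset.sum_nonneg fun v _ => hy0 (.inl v)
      have hlampos : 0 < lam := by
        rcases lt_or_eq_of_le hlam0 with h | h
        · exact h
        · exfalso
          rw [← h, zero_mul] at hsizec
          linarith
      -- t / lam is a fractional cover of size < β; contradiction with cover_lemma
      have hcov' : ∀ e ∈ E, 1 ≤ ∑ v ∈ e, t v / lam := by
        intro e he
        rw [← Finset.sum_div, one_le_div hlampos]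
        have h2 : ∑ v ∈ e, t v = y (.inr (.inl ⟨e, he⟩)) + lam := hedge ⟨e, he⟩
        have hs0 : 0 ≤ y (.inr (.inl ⟨e, he⟩)) := hy0 _
        linarith
      have hcovsize := cover_lemma k E hk hV hunif hlink (fun v => t v / lam)
        (fun v => div_nonneg (hy0 (.inl v)) hlam0) hcov'
      rw [← Finset.sum_div] at hcovsize
      have hlt : (∑ v : V, t v) / lam < β := by
        rw [div_lt_iff₀ hlampos]
        linarith [hsizec, mul_comm lam β]
      have : β ≤ (∑ v : V, t v) / lam := hcovsize
      linarith
    obtain ⟨w, hwm, hwS⟩ := hmain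
    obtain ⟨hw01, hw00, hwdeg⟩ := hwm
    set S : ℝ := ∑ e : Finset V, w e with hSdef
    have hS0 : 0 < S := lt_of_lt_of_le hβ0 hwS
    set r : ℝ := β / S with hr
    have hr0 : 0 ≤ r := div_nonneg hβ0.le hS0.le
    have hr1 : r ≤ 1 := (div_le_one hS0).2 hwS
    refine ⟨fun e => r * w e, ⟨?_, ?_, ?_⟩, ?_⟩
    · intro e
      constructor
      · exact mul_nonneg hr0 (hw01 e).1
      · calc r * w e ≤ 1 * w e := mul_le_mul_of_nonneg_right hr1 (hw01 e).1
          _ = w e := one_mul _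
          _ ≤ 1 := (hw01 e).2
    · intro e hE
      show r * w e = 0
      rw [hw00 e hE, mul_zero]
    · intro v
      rw [← Finset.mul_sum]
      calc r * ∑ e ∈ Finset.univ.filter (fun e => v ∈ e), w e ≤
          1 * ∑ e ∈ Finset.univ.filter (fun e => v ∈ e), w e :=
            mul_le_mul_of_nonneg_right hr1
              (Finset.sum_nonneg fun e _ => (hw01 e).1)
        _ ≤ 1 := by rw [one_mul]; exact hwdeg v
    · rw [← Finset.mul_sum, ← hSdef, hr, div_mul_cancel₀ _ (ne_of_gt hS0)]
end

section
/- The maximum number of edges in an oriented graph on n vertices that contains no copy of the transitive tournament on k vertices is exactly t(n, r(k) − 1), where r(k) is the smallest integer m such that every tournament on m vertices contains a transitive tournament on k vertices, and t(n, j) is the number of edges of the Turán graph on n vertices with j parts. -/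
open Finset

/-- An oriented graph: at most one directed edge between any pair of vertices. -/
structure OrientedGraph (V : Type*) where
  adj : V → V → Prop
  asymm : ∀ u v, adj u v → ¬ adj v u

namespace OrientedGraph

variable {V : Type*}

/-- A tournament: a complete oriented graph. -/
def IsTournament (G : OrientedGraph V) : Prop :=
  ∀ u v : V, u ≠ v → G.adj u v ∨ G.adj v u

/-- `U` is the vertex set of a copy of the transitive tournament on `k` vertices in `G`. -/
def IsTTCopy (G : OrientedGraph V) (k : ℕ) (U : Finset V) : Prop :=
  ∃ f : Fin k ↪ V, Finset.univ.map f = U ∧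
    ∀ i j : Fin k, i < j → G.adj (f i) (f j)

/-- Total degree of a vertex: the number of edges incident to it. -/
noncomputable def degree [Fintype V] (G : OrientedGraph V) (v : V) : ℕ :=
  Nat.card {u : V // G.adj v u ∨ G.adj u v}

/-- Minimum total degree. -/
noncomputable def minDegree [Fintype V] (G : OrientedGraph V) : ℕ :=
  sInf (Set.range G.degree)

/-- Number of (directed) edges. -/
noncomputable def edgeCount [Fintype V] (G : OrientedGraph V) : ℕ :=
  Nat.card {p : V × V // G.adj p.1 p.2}

section
variable [Fintype V] [DecidableEq V]

/-- A fractional `T_k`-tiling: a weight function on copies of the transitive tournament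
`T_k` such that every vertex has total incident weight at most `1`. -/
def IsFracTiling (G : OrientedGraph V) (k : ℕ) (w : Finset V → ℝ) : Prop :=
  (∀ U, 0 ≤ w U) ∧ (∀ U, ¬ G.IsTTCopy k U → w U = 0) ∧
    ∀ v : V, ∑ U ∈ Finset.univ.filter (fun U => v ∈ U), w U ≤ 1

/-- A perfect fractional `T_k`-tiling: total weight `n/k`. -/
def HasPerfectFracTiling (G : OrientedGraph V) (k : ℕ) : Prop :=
  ∃ w : Finset V → ℝ, G.IsFracTiling k w ∧
    ∑ U : Finset V, w U = (Fintype.card V : ℝ) / k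

/-- A perfect `T_k`-tiling: vertex-disjoint copies of `T_k` covering all vertices. -/
def HasPerfectTiling (G : OrientedGraph V) (k : ℕ) : Prop :=
  ∃ P : Finset (Finset V), (∀ U ∈ P, G.IsTTCopy k U) ∧
    (P : Set (Finset V)).PairwiseDisjoint id ∧ P.sup id = Finset.univ

end

end OrientedGraph

/-- The oriented Ramsey number `r(k)`: the least `m` such that every tournament on `m`
vertices contains a copy of the transitive tournament `T_k`. -/
noncomputable def oRamsey (k : ℕ) : ℕ :=
  sInf {m | ∀ G : OrientedGraph (Fin m), G.IsTournament → ∃ U, G.IsTTCopy k U}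

/-- `trs k`: the least (positive) `n` such that every tournament on `n` vertices has a
perfect fractional `T_k`-tiling. -/
noncomputable def trs (k : ℕ) : ℕ :=
  sInf {n | 0 < n ∧ ∀ G : OrientedGraph (Fin n), G.IsTournament → G.HasPerfectFracTiling k}

/-- `trInt k`: the least (positive) `n` such that every tournament on `n` vertices has a
perfect `T_k`-tiling. -/
noncomputable def trInt (k : ℕ) : ℕ :=
  sInf {n | 0 < n ∧ ∀ G : OrientedGraph (Fin n), G.IsTournament → G.HasPerfectTiling k}

/-! ### Auxiliary material -/

namespace OrientedGraph

variable {V : Type*}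

lemma irrefl' (G : OrientedGraph V) (v : V) : ¬ G.adj v v := fun h => G.asymm v v h h

lemma exists_chain [DecidableEq V] (G : OrientedGraph V) :
    ∀ (k : ℕ) (S : Finset V), (∀ u ∈ S, ∀ v ∈ S, u ≠ v → G.adj u v ∨ G.adj v u) →
      2 ^ k ≤ S.card →
      ∃ f : Fin (k+1) ↪ V, (∀ i, f i ∈ S) ∧ ∀ i j, i < j → G.adj (f i) (f j) := by
  classical
  intro k
  induction k with
  | zero =>
    intro S _ hcard
    obtain ⟨v, hv⟩ := Finset.card_pos.mp ((Nat.two_pow_pos 0).trans_le hcard)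
    refine ⟨⟨fun _ => v, fun a b _ => Fin.ext (by omega)⟩, fun _ => hv, ?_⟩
    intro i j hij
    exact absurd (Fin.lt_def.mp hij) (by have := j.isLt; omega)
  | succ k ih =>
    intro S hT hcard
    obtain ⟨v, hv⟩ := Finset.card_pos.mp ((Nat.two_pow_pos (k+1)).trans_le hcard)
    set A : Finset V := S.filter (fun u => G.adj v u) with hA
    set B : Finset V := S.filter (fun u => G.adj u v) with hB
    have hsub : S ⊆ insert v (A ∪ B) := by
      intro u hu
      rcases eq_or_ne u v with rfl | hne
      · exact Finset.mem_insert_self _ _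
      · rcases hT v hv u hu (Ne.symm hne) with h | h
        · exact Finset.mem_insert_of_mem (Finset.mem_union_left _ (by simp [hA, hu, h]))
        · exact Finset.mem_insert_of_mem (Finset.mem_union_right _ (by simp [hB, hu, h]))
    have hcard2 : S.card ≤ A.card + B.card + 1 := by
      calc S.card ≤ (insert v (A ∪ B)).card := Finset.card_le_card hsub
        _ ≤ (A ∪ B).card + 1 := Finset.card_insert_le _ _
        _ ≤ A.card + B.card + 1 := by have := Finset.card_union_le A B; omega
    have hAS : A ⊆ S := Finset.filter_subset _ _
    have hBS : B ⊆ S := Finset.filter_subset _ _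
    have key : 2 ^ k ≤ A.card ∨ 2 ^ k ≤ B.card := by
      by_contra h
      push_neg at h
      have : 2 ^ (k+1) = 2 ^ k + 2 ^ k := by ring
      omega
    rcases key with hcA | hcB
    · obtain ⟨f, hfS, hfadj⟩ := ih A (fun u hu w hw => hT u (hAS hu) w (hAS hw)) hcA
      have hvf : ∀ i, v ≠ f i := fun i h =>
        G.irrefl' v (h ▸ (Finset.mem_filter.mp (hfS i)).2)
      have hinj : Function.Injective (fun i : Fin (k+2) => (Fin.cases v (fun i => f i) i : V)) := by
        intro a b hab
        rcases Fin.eq_zero_or_eq_succ a with rfl | ⟨a', rfl⟩ <;>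
          rcases Fin.eq_zero_or_eq_succ b with rfl | ⟨b', rfl⟩ <;>
          simp only [Fin.cases_zero, Fin.cases_succ] at hab
        · rfl
        · exact absurd hab (hvf b')
        · exact absurd hab.symm (hvf a')
        · exact congrArg Fin.succ (f.injective hab)
      refine ⟨⟨_, hinj⟩, ?_, ?_⟩
      · intro i
        rcases Fin.eq_zero_or_eq_succ i with rfl | ⟨i', rfl⟩
        · simp only [Function.Embedding.coeFn_mk, Fin.cases_zero]; exact hv
        · simp only [Function.Embedding.coeFn_mk, Fin.cases_succ]; exact hAS (hfS i')
      · intro i j hij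
        rcases Fin.eq_zero_or_eq_succ j with rfl | ⟨j', rfl⟩
        · exact absurd hij (by simp [Fin.lt_def])
        rcases Fin.eq_zero_or_eq_succ i with rfl | ⟨i', rfl⟩
        · simp only [Function.Embedding.coeFn_mk, Fin.cases_zero, Fin.cases_succ]
          exact (Finset.mem_filter.mp (hfS j')).2
        · simp only [Function.Embedding.coeFn_mk, Fin.cases_succ]
          exact hfadj i' j' (Fin.succ_lt_succ_iff.mp hij)
    · obtain ⟨f, hfS, hfadj⟩ := ih B (fun u hu w hw => hT u (hBS hu) w (hBS hw)) hcB
      have hvf : ∀ i, v ≠ f i := fun i h =>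
        G.irrefl' v (h ▸ (Finset.mem_filter.mp (hfS i)).2)
      have hinj : Function.Injective (Fin.snoc (fun i => f i) v : Fin (k+2) → V) := by
        intro a b hab
        rcases Fin.eq_castSucc_or_eq_last a with ⟨a', rfl⟩ | rfl <;>
          rcases Fin.eq_castSucc_or_eq_last b with ⟨b', rfl⟩ | rfl <;>
          simp only [Fin.snoc_castSucc, Fin.snoc_last] at hab
        · exact congrArg Fin.castSucc (f.injective hab)
        · exact absurd hab.symm (hvf a')
        · exact absurd hab (hvf b')
        · rfl
      refine ⟨⟨_, hinj⟩, ?_, ?_⟩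
      · intro i
        rcases Fin.eq_castSucc_or_eq_last i with ⟨i', rfl⟩ | rfl
        · simp only [Function.Embedding.coeFn_mk, Fin.snoc_castSucc]; exact hBS (hfS i')
        · simp only [Function.Embedding.coeFn_mk, Fin.snoc_last]; exact hv
      · intro i j hij
        rcases Fin.eq_castSucc_or_eq_last i with ⟨i', rfl⟩ | rfl
        · rcases Fin.eq_castSucc_or_eq_last j with ⟨j', rfl⟩ | rfl
          · simp only [Function.Embedding.coeFn_mk, Fin.snoc_castSucc]
            exact hfadj i' j' (Fin.castSucc_lt_castSucc_iff.mp hij)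
          · simp only [Function.Embedding.coeFn_mk, Fin.snoc_castSucc, Fin.snoc_last]
            exact (Finset.mem_filter.mp (hfS i')).2
        · refine absurd hij ?_
          have := j.isLt
          simp only [Fin.lt_def, Fin.val_last, Fin.coe_castSucc, not_lt]
          omega

/-- The underlying simple graph of an oriented graph. -/
def sym (G : OrientedGraph V) : SimpleGraph V where
  Adj u v := G.adj u v ∨ G.adj v u
  symm := ⟨fun _ _ h => h.symm⟩
  loopless := ⟨fun v h => h.elim (G.irrefl' v) (G.irrefl' v)⟩

lemma edgeCount_eq_ncard [Fintype V] (G : OrientedGraph V) :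
    G.edgeCount = Nat.card G.sym.edgeSet := by
  refine Nat.card_eq_of_bijective
    (fun p => (⟨s(p.1.1, p.1.2), by
        rw [SimpleGraph.mem_edgeSet]; exact Or.inl p.2⟩ : G.sym.edgeSet)) ⟨?_, ?_⟩
  · rintro ⟨⟨a, b⟩, hab⟩ ⟨⟨c, d⟩, hcd⟩ h
    simp only [Subtype.mk.injEq, Sym2.eq_iff] at h
    rcases h with ⟨rfl, rfl⟩ | ⟨rfl, rfl⟩
    · rfl
    · exact absurd hab (G.asymm _ _ hcd)
  · rintro ⟨e, he⟩
    induction e using Sym2.ind with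
    | _ a b =>
      rw [SimpleGraph.mem_edgeSet] at he
      rcases he with h | h
      · exact ⟨⟨(a, b), h⟩, rfl⟩
      · exact ⟨⟨(b, a), h⟩, Subtype.ext (Sym2.eq_swap)⟩

end OrientedGraph

lemma oRamsey_set_nonempty (k : ℕ) (hk : 1 ≤ k) :
    (2 : ℕ) ^ (k - 1) ∈
      {m | ∀ G : OrientedGraph (Fin m), G.IsTournament → ∃ U, G.IsTTCopy k U} := by
  obtain ⟨k', rfl⟩ : ∃ k', k = k' + 1 := ⟨k - 1, by omega⟩
  intro G hG
  obtain ⟨f, _, hadj⟩ := G.exists_chain k' Finset.univ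
    (fun u _ v _ huv => hG u v huv)
    (by simp only [Finset.card_univ, Fintype.card_fin, Nat.add_sub_cancel]; exact le_rfl)
  exact ⟨Finset.univ.map f, f, rfl, hadj⟩

lemma oRamsey_spec (k : ℕ) (hk : 1 ≤ k) :
    ∀ G : OrientedGraph (Fin (oRamsey k)), G.IsTournament → ∃ U, G.IsTTCopy k U :=
  Nat.sInf_mem ⟨2 ^ (k - 1), oRamsey_set_nonempty k hk⟩

lemma two_le_oRamsey (k : ℕ) (hk : 2 ≤ k) : 2 ≤ oRamsey k := by
  by_contra h
  push_neg at h
  set r := oRamsey k with hr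
  have hspec := oRamsey_spec k (by omega)
  set G0 : OrientedGraph (Fin r) := ⟨fun _ _ => False, fun _ _ h' => h'.elim⟩ with hG0
  have hT : G0.IsTournament := by
    intro u v huv
    exact absurd (Fin.ext (by have := u.isLt; have := v.isLt; omega)) huv
  obtain ⟨U, f, -, hadj⟩ := hspec G0 hT
  exact hadj ⟨0, by omega⟩ ⟨1, by omega⟩ (by simp [Fin.lt_def])

/-- The maximum number of edges in an oriented graph on `n` vertices containing no copy of
the transitive tournament `T_k` is exactly `t(n, r(k) - 1)`, the number of edges of the
Turán graph on `n` vertices with `r(k) - 1` parts. -/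
theorem stmt_3 (k n : ℕ) (hk : 2 ≤ k) :
    IsGreatest {m : ℕ | ∃ G : OrientedGraph (Fin n),
        (¬ ∃ U : Finset (Fin n), G.IsTTCopy k U) ∧ m = G.edgeCount}
      (Nat.card (SimpleGraph.turanGraph n (oRamsey k - 1)).edgeSet) := by
  classical
  set r := oRamsey k with hrdef
  have hr2 : 2 ≤ r := two_le_oRamsey k hk
  set r' := r - 1 with hr'def
  have hr'pos : 0 < r' := by omega
  constructor
  · -- membership: a Turán-many-edged T_k-free oriented graph exists
    -- take a T_k-free tournament R on r-1 vertices and blow it up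
    have hnotmem : r' ∉ {m | ∀ G : OrientedGraph (Fin m), G.IsTournament →
        ∃ U, G.IsTTCopy k U} := by
      intro hmem
      have : r ≤ r' := Nat.sInf_le hmem
      omega
    simp only [Set.mem_setOf_eq, not_forall] at hnotmem
    obtain ⟨R, hRT, hRfree⟩ := hnotmem
    set G : OrientedGraph (Fin n) :=
      ⟨fun u v => R.adj ⟨u.val % r', Nat.mod_lt _ hr'pos⟩ ⟨v.val % r', Nat.mod_lt _ hr'pos⟩,
       fun u v h => R.asymm _ _ h⟩ with hGdef
    have hGfree : ¬ ∃ U : Finset (Fin n), G.IsTTCopy k U := by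
      rintro ⟨U, f, -, hadj⟩
      refine hRfree ?_
      have ginj : Function.Injective
          (fun i : Fin k => (⟨(f i).val % r', Nat.mod_lt _ hr'pos⟩ : Fin r')) := by
        intro a b hab
        by_contra hne
        have hab' : (⟨(f a).val % r', Nat.mod_lt _ hr'pos⟩ : Fin r') =
            ⟨(f b).val % r', Nat.mod_lt _ hr'pos⟩ := hab
        rcases lt_trichotomy a b with h | h | h
        · have h2 : R.adj ⟨(f a).val % r', Nat.mod_lt _ hr'pos⟩
              ⟨(f b).val % r', Nat.mod_lt _ hr'pos⟩ := hadj a b h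
          rw [hab'] at h2
          exact R.irrefl' _ h2
        · exact hne h
        · have h2 : R.adj ⟨(f b).val % r', Nat.mod_lt _ hr'pos⟩
              ⟨(f a).val % r', Nat.mod_lt _ hr'pos⟩ := hadj b a h
          rw [hab'] at h2
          exact R.irrefl' _ h2
      exact ⟨Finset.univ.map ⟨_, ginj⟩, ⟨_, ginj⟩, rfl, fun i j hij => hadj i j hij⟩
    have hsym : G.sym = SimpleGraph.turanGraph n r' := by
      ext u v
      simp only [OrientedGraph.sym, SimpleGraph.turanGraph]
      constructor
      · rintro (h | h) hmod
        · exact R.irrefl' _ (by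
            have : (⟨u.val % r', Nat.mod_lt _ hr'pos⟩ : Fin r') =
                ⟨v.val % r', Nat.mod_lt _ hr'pos⟩ := Fin.ext hmod
            have h' : R.adj ⟨u.val % r', Nat.mod_lt _ hr'pos⟩ ⟨v.val % r', Nat.mod_lt _ hr'pos⟩ := h
            exact this ▸ h')
        · exact R.irrefl' _ (by
            have : (⟨v.val % r', Nat.mod_lt _ hr'pos⟩ : Fin r') =
                ⟨u.val % r', Nat.mod_lt _ hr'pos⟩ := Fin.ext hmod.symm
            have h' : R.adj ⟨v.val % r', Nat.mod_lt _ hr'pos⟩ ⟨u.val % r', Nat.mod_lt _ hr'pos⟩ := h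
            exact this ▸ h')
      · intro hmod
        exact hRT _ _ (fun h => hmod (by simpa using congrArg Fin.val h))
    refine ⟨G, hGfree, ?_⟩
    rw [G.edgeCount_eq_ncard, hsym]
  · -- upper bound
    rintro m ⟨G, hGfree, rfl⟩
    have hcf : G.sym.CliqueFree r := by
      intro t ht
      have hcard : Fintype.card {x // x ∈ t} = r := by
        rw [Fintype.card_coe]; exact ht.2
      let e : Fin r ≃ {x // x ∈ t} := (Fintype.equivFinOfCardEq hcard).symm
      set G' : OrientedGraph (Fin r) :=
        ⟨fun i j => G.adj (e i).val (e j).val, fun i j h => G.asymm _ _ h⟩ with hG'def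
      have hG'T : G'.IsTournament := by
        intro i j hij
        have hne : (e i).val ≠ (e j).val := fun h =>
          hij (e.injective (Subtype.ext h))
        exact ht.1 (e i).2 (e j).2 hne
      obtain ⟨U, f, -, hadj⟩ := oRamsey_spec k (by omega) G' hG'T
      have hinj : Function.Injective (fun i : Fin k => ((e (f i)).val : Fin n)) :=
        fun a b hab => f.injective (e.injective (Subtype.ext hab))
      exact hGfree ⟨Finset.univ.map ⟨_, hinj⟩, ⟨_, hinj⟩, rfl,
        fun i j hij => hadj i j hij⟩
    have hcf' : G.sym.CliqueFree (r' + 1) := by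
      have : r' + 1 = r := by omega
      rw [this]; exact hcf
    have htm := SimpleGraph.isTuranMaximal_turanGraph (n := n) hr'pos
    have hle := htm.2 hcf'
    rw [G.edgeCount_eq_ncard]
    calc Nat.card G.sym.edgeSet = G.sym.edgeSet.ncard := rfl
      _ = G.sym.edgeFinset.card := by rw [Set.ncard_eq_toFinset_card']; exact congrArg Finset.card (by ext; simp)
      _ ≤ (SimpleGraph.turanGraph n r').edgeFinset.card := hle
      _ = (SimpleGraph.turanGraph n r').edgeSet.ncard := by
          rw [Set.ncard_eq_toFinset_card']; exact congrArg Finset.card (by ext; simp)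
      _ = Nat.card (SimpleGraph.turanGraph n r').edgeSet := rfl
end

section
/- If a tournament T on 2·r(k−1) − 1 vertices has a vertex u with |N⁺(u)| = |N⁻(u)| = r(k−1) − 1, both N⁺(u) and N⁻(u) induce tournaments with no copy of T_{k−1}, and all edges between N⁺(u) and N⁻(u) are directed from N⁺(u) to N⁻(u), then u is contained in no copy of the transitive tournament T_k in T. In particular, T admits no perfect fractional T_k-tiling. -/
open Finset

/-- If a tournament `T` on `2·r(k-1) - 1` vertices has a vertex `u` with
`|N⁺(u)| = |N⁻(u)| = r(k-1) - 1`, both neighbourhoods inducing `T_{k-1}`-free tournaments,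
and all edges between `N⁺(u)` and `N⁻(u)` directed from `N⁺(u)` to `N⁻(u)`, then `u` lies
in no copy of `T_k`; in particular `T` has no perfect fractional `T_k`-tiling. -/
theorem stmt_4 (k : ℕ) (hk : 3 ≤ k) {V : Type*} [Fintype V] [DecidableEq V]
    (G : OrientedGraph V) (hT : G.IsTournament)
    (hcard : Fintype.card V = 2 * oRamsey (k - 1) - 1) (u : V)
    (hout : Nat.card {v : V // G.adj u v} = oRamsey (k - 1) - 1)
    (hin : Nat.card {v : V // G.adj v u} = oRamsey (k - 1) - 1)
    (houtfree : ¬ ∃ U : Finset V, (∀ v ∈ U, G.adj u v) ∧ G.IsTTCopy (k - 1) U)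
    (hinfree : ¬ ∃ U : Finset V, (∀ v ∈ U, G.adj v u) ∧ G.IsTTCopy (k - 1) U)
    (hcross : ∀ a b : V, G.adj u a → G.adj b u → G.adj a b) :
    (¬ ∃ U : Finset V, G.IsTTCopy k U ∧ u ∈ U) ∧ ¬ G.HasPerfectFracTiling k := by
  have hkpos : 0 < k := by omega
  have hnocopy : ¬ ∃ U : Finset V, G.IsTTCopy k U ∧ u ∈ U := by
    rintro ⟨U, ⟨f, hmap, hadj⟩, huU⟩
    rw [← hmap, Finset.mem_map] at huU
    obtain ⟨i, -, hfi⟩ := huU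
    by_cases h0 : i.val = 0
    · apply houtfree
      refine ⟨Finset.univ.map ⟨fun m : Fin (k-1) => f ⟨m.val + 1, by have := m.2; omega⟩,
        ?_⟩, ?_, ?_⟩
      · intro a b hab
        have h := f.injective hab
        simp only [Fin.mk.injEq] at h
        exact Fin.ext (by omega)
      · intro v hv
        simp only [Finset.mem_map, Finset.mem_univ, true_and,
          Function.Embedding.coeFn_mk] at hv
        obtain ⟨m, rfl⟩ := hv
        rw [← hfi]
        exact hadj i _ (Fin.lt_def.mpr (show i.val < m.val + 1 by omega))
      · exact ⟨_, rfl, fun a b hab =>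
          hadj _ _ (Fin.mk_lt_mk.mpr (by have := Fin.lt_def.mp hab; omega))⟩
    · by_cases h1 : i.val = k - 1
      · apply hinfree
        refine ⟨Finset.univ.map ⟨fun m : Fin (k-1) => f ⟨m.val, by have := m.2; omega⟩,
          ?_⟩, ?_, ?_⟩
        · intro a b hab
          have h := f.injective hab
          simp only [Fin.mk.injEq] at h
          exact Fin.ext h
        · intro v hv
          simp only [Finset.mem_map, Finset.mem_univ, true_and,
            Function.Embedding.coeFn_mk] at hv
          obtain ⟨m, rfl⟩ := hv
          rw [← hfi]
          exact hadj _ i (Fin.lt_def.mpr (show m.val < i.val by have := m.2; omega))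
        · exact ⟨_, rfl, fun a b hab =>
            hadj _ _ (Fin.mk_lt_mk.mpr (Fin.lt_def.mp hab))⟩
      · -- middle case: pick a before and after vertex
        have hi := i.2
        have hji : (⟨0, by omega⟩ : Fin k) < i :=
          Fin.lt_def.mpr (show 0 < i.val by omega)
        have hij : i < (⟨k - 1, by omega⟩ : Fin k) :=
          Fin.lt_def.mpr (show i.val < k - 1 by omega)
        have hbu : G.adj (f ⟨0, by omega⟩) u := hfi ▸ hadj _ i hji
        have hua : G.adj u (f ⟨k - 1, by omega⟩) := hfi ▸ hadj i _ hij
        have h1 := hcross _ _ hua hbu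
        have h2 := hadj (⟨0, by omega⟩ : Fin k) (⟨k - 1, by omega⟩ : Fin k)
          (Fin.mk_lt_mk.mpr (by omega))
        exact G.asymm _ _ h1 h2
  refine ⟨hnocopy, ?_⟩
  rintro ⟨w, ⟨hnn, hzero, hdeg⟩, htot⟩
  have hn1 : 1 ≤ Fintype.card V := Fintype.card_pos_iff.mpr ⟨u⟩
  set n := Fintype.card V with hn
  -- u has zero incident weight
  have hu0 : ∑ U ∈ Finset.univ.filter (fun U => u ∈ U), w U = 0 := by
    apply Finset.sum_eq_zero
    intro U hU
    simp only [Finset.mem_filter] at hU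
    by_contra hw
    exact hnocopy ⟨U, by_contra fun hc => hw (hzero U hc), hU.2⟩
  have hcardU : ∀ U : Finset V, w U ≠ 0 → U.card = k := by
    intro U hw
    obtain ⟨f, hmap, -⟩ := by_contra fun hc => hw (hzero U hc)
    rw [← hmap, Finset.card_map, Finset.card_univ, Fintype.card_fin]
  have key : (k : ℝ) * ∑ U : Finset V, w U
      = ∑ v : V, ∑ U ∈ Finset.univ.filter (fun U => v ∈ U), w U := by
    rw [Finset.mul_sum]
    have : ∀ v : V, ∑ U ∈ Finset.univ.filter (fun U => v ∈ U), w U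
        = ∑ U : Finset V, if v ∈ U then w U else 0 := fun v =>
      Finset.sum_filter _ _
    simp_rw [this]
    rw [Finset.sum_comm]
    apply Finset.sum_congr rfl
    intro U _
    rw [Finset.sum_ite_mem, Finset.univ_inter, Finset.sum_const, nsmul_eq_mul]
    by_cases hw : w U = 0
    · simp [hw]
    · rw [hcardU U hw]
  have hbound : ∑ v : V, ∑ U ∈ Finset.univ.filter (fun U => v ∈ U), w U
      ≤ (n : ℝ) - 1 := by
    rw [← Finset.add_sum_erase _ _ (Finset.mem_univ u), hu0, zero_add]
    calc ∑ v ∈ Finset.univ.erase u, ∑ U ∈ Finset.univ.filter (fun U => v ∈ U), w U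
        ≤ ∑ _v ∈ Finset.univ.erase u, (1 : ℝ) :=
          Finset.sum_le_sum fun v _ => hdeg v
      _ = (n : ℝ) - 1 := by
          rw [Finset.sum_const, Finset.card_erase_of_mem (Finset.mem_univ u),
            Finset.card_univ, nsmul_eq_mul, mul_one]
          rw [Nat.cast_sub hn1, Nat.cast_one]
  have hkne : (k : ℝ) ≠ 0 := by positivity
  have hfin : (n : ℝ) ≤ (n : ℝ) - 1 := by
    calc (n : ℝ) = k * ((n : ℝ) / k) := by field_simp
      _ = k * ∑ U : Finset V, w U := by rw [htot]
      _ = _ := key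
      _ ≤ (n : ℝ) - 1 := hbound
  linarith
end

section
/- For every k ≥ 3, every tournament T on n = k·(2·r(k−1) − k + 1) vertices has a perfect fractional T_k-tiling. Equivalently, the fractional tiling threshold satisfies trs(k) ≤ k·(2·r(k−1) − k + 1). -/
open Finset

namespace OrientedGraph
variable {V : Type*}

lemma isTTCopy_zero (G : OrientedGraph V) : G.IsTTCopy 0 ∅ := by
  refine ⟨⟨Fin.elim0, fun i => i.elim0⟩, ?_, fun i => i.elim0⟩
  simp

lemma isTTCopy_card {G : OrientedGraph V} {k : ℕ} {U : Finset V}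
    (h : G.IsTTCopy k U) : U.card = k := by
  obtain ⟨f, hf, -⟩ := h
  rw [← hf, Finset.card_map, Finset.card_univ, Fintype.card_fin]

lemma cons_copy [DecidableEq V] {G : OrientedGraph V} {j : ℕ} {U : Finset V} {v : V}
    (h : G.IsTTCopy j U) (hv : v ∉ U) (hadj : ∀ u ∈ U, G.adj v u) :
    G.IsTTCopy (j + 1) (insert v U) := by
  obtain ⟨f, hfU, hmono⟩ := h
  have hmemU : ∀ i, f i ∈ U := by
    intro i; rw [← hfU]; exact Finset.mem_map_of_mem f (Finset.mem_univ i)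
  have hinj : Function.Injective (Fin.cons v (⇑f) : Fin (j+1) → V) := by
    rw [Fin.cons_injective_iff]
    exact ⟨fun ⟨i, hi⟩ => hv (hi ▸ hmemU i), f.injective⟩
  refine ⟨⟨Fin.cons v ⇑f, hinj⟩, ?_, ?_⟩
  · ext x
    simp only [Finset.mem_map, Finset.mem_univ, true_and, Function.Embedding.coeFn_mk,
      Finset.mem_insert]
    constructor
    · rintro ⟨i, rfl⟩
      cases i using Fin.cases with
      | zero => left; simp
      | succ a => right; simpa using hmemU a
    · rintro (rfl | hx)
      · exact ⟨0, by simp⟩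
      · rw [← hfU] at hx
        simp only [Finset.mem_map, Finset.mem_univ, true_and] at hx
        obtain ⟨i, rfl⟩ := hx
        exact ⟨i.succ, by simp⟩
  · intro i i' hlt
    cases i using Fin.cases with
    | zero =>
      cases i' using Fin.cases with
      | zero => exact absurd hlt (lt_irrefl _)
      | succ b => simpa using hadj _ (hmemU b)
    | succ a =>
      cases i' using Fin.cases with
      | zero => exact absurd hlt (by simp [Fin.lt_def])
      | succ b =>
        have : a < b := by simpa [Fin.succ_lt_succ_iff] using hlt
        simpa using hmono a b this

lemma snoc_copy [DecidableEq V] {G : OrientedGraph V} {j : ℕ} {U : Finset V} {v : V}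
    (h : G.IsTTCopy j U) (hv : v ∉ U) (hadj : ∀ u ∈ U, G.adj u v) :
    G.IsTTCopy (j + 1) (insert v U) := by
  obtain ⟨f, hfU, hmono⟩ := h
  have hmemU : ∀ i, f i ∈ U := by
    intro i; rw [← hfU]; exact Finset.mem_map_of_mem f (Finset.mem_univ i)
  have hinj : Function.Injective (Fin.snoc (⇑f) v : Fin (j+1) → V) := by
    intro a b hab
    cases a using Fin.lastCases with
    | last =>
      cases b using Fin.lastCases with
      | last => rfl
      | cast b' =>
        rw [Fin.snoc_last, Fin.snoc_castSucc] at hab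
        exact absurd (hab ▸ hmemU b') hv
    | cast a' =>
      cases b using Fin.lastCases with
      | last =>
        rw [Fin.snoc_last, Fin.snoc_castSucc] at hab
        exact absurd (hab ▸ hmemU a') hv
      | cast b' =>
        rw [Fin.snoc_castSucc, Fin.snoc_castSucc] at hab
        rw [f.injective hab]
  refine ⟨⟨Fin.snoc (⇑f) v, hinj⟩, ?_, ?_⟩
  · ext x
    simp only [Finset.mem_map, Finset.mem_univ, true_and, Function.Embedding.coeFn_mk,
      Finset.mem_insert]
    constructor
    · rintro ⟨i, rfl⟩
      cases i using Fin.lastCases with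
      | last => left; simp
      | cast a => right; simpa using hmemU a
    · rintro (rfl | hx)
      · exact ⟨Fin.last j, by simp⟩
      · rw [← hfU] at hx
        simp only [Finset.mem_map, Finset.mem_univ, true_and] at hx
        obtain ⟨i, rfl⟩ := hx
        exact ⟨i.castSucc, by simp⟩
  · intro i i' hlt
    cases i using Fin.lastCases with
    | last =>
      cases i' using Fin.lastCases with
      | last => exact absurd hlt (lt_irrefl _)
      | cast b => exact absurd hlt (by simpa using (Fin.castSucc_lt_last b).asymm)
    | cast a =>
      cases i' using Fin.lastCases with
      | last => simpa using hadj _ (hmemU a)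
      | cast b =>
        have : a < b := by simpa [Fin.castSucc_lt_castSucc_iff] using hlt
        simpa using hmono a b this

end OrientedGraph

namespace OrientedGraph
variable {V : Type*}

/-- Extend a `T_j`-finding hypothesis to find a `T_{j+1}` copy through a given vertex. -/
lemma copy_through_aux [Fintype V] [DecidableEq V] {G : OrientedGraph V}
    (hG : G.IsTournament) {j m : ℕ}
    (hm : ∀ S : Finset V, m ≤ S.card → ∃ U ⊆ S, G.IsTTCopy j U)
    (v : V) (W : Finset V) (hv : v ∉ W) (hW : 2 * m ≤ W.card + 1) :
    ∃ U, G.IsTTCopy (j + 1) U ∧ v ∈ U ∧ U ⊆ insert v W := by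
  classical
  set Wp := W.filter (fun u => G.adj v u) with hWp
  set Wm := W.filter (fun u => G.adj u v) with hWm
  have hsplit : W ⊆ Wp ∪ Wm := by
    intro u hu
    rcases hG v u (fun h => hv (h ▸ hu)) with h | h
    · exact Finset.mem_union_left _ (Finset.mem_filter.2 ⟨hu, h⟩)
    · exact Finset.mem_union_right _ (Finset.mem_filter.2 ⟨hu, h⟩)
  have hcard : W.card ≤ Wp.card + Wm.card :=
    le_trans (Finset.card_le_card hsplit) (Finset.card_union_le _ _)
  have hor : m ≤ Wp.card ∨ m ≤ Wm.card := by omega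
  rcases hor with h | h
  · obtain ⟨U₀, hU₀sub, hU₀⟩ := hm Wp h
    have hvU₀ : v ∉ U₀ := fun hvv =>
      hv (Finset.mem_filter.1 (hU₀sub hvv)).1
    have hadj : ∀ u ∈ U₀, G.adj v u := fun u hu =>
      (Finset.mem_filter.1 (hU₀sub hu)).2
    refine ⟨insert v U₀, cons_copy hU₀ hvU₀ hadj, Finset.mem_insert_self _ _, ?_⟩
    exact Finset.insert_subset_insert _
      (hU₀sub.trans (Finset.filter_subset _ _))
  · obtain ⟨U₀, hU₀sub, hU₀⟩ := hm Wm h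
    have hvU₀ : v ∉ U₀ := fun hvv =>
      hv (Finset.mem_filter.1 (hU₀sub hvv)).1
    have hadj : ∀ u ∈ U₀, G.adj u v := fun u hu =>
      (Finset.mem_filter.1 (hU₀sub hu)).2
    refine ⟨insert v U₀, snoc_copy hU₀ hvU₀ hadj, Finset.mem_insert_self _ _, ?_⟩
    exact Finset.insert_subset_insert _
      (hU₀sub.trans (Finset.filter_subset _ _))

lemma ramseyAux : ∀ j : ℕ, ∃ m : ℕ, ∀ (V' : Type) [Fintype V'] [DecidableEq V']
    (G : OrientedGraph V'), G.IsTournament → ∀ S : Finset V', m ≤ S.card →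
    ∃ U ⊆ S, G.IsTTCopy j U := by
  intro j
  induction j with
  | zero => exact ⟨0, fun V' _ _ G _ S _ => ⟨∅, Finset.empty_subset _, G.isTTCopy_zero⟩⟩
  | succ j ih =>
    obtain ⟨m, hm⟩ := ih
    refine ⟨2 * m + 1, ?_⟩
    intro V' _ _ G hG S hS
    have hne : S.Nonempty := Finset.card_pos.1 (by omega)
    obtain ⟨v, hv⟩ := hne
    have hvW : v ∉ S.erase v := Finset.notMem_erase _ _
    have hWcard : 2 * m ≤ (S.erase v).card + 1 := by
      rw [Finset.card_erase_of_mem hv]; omega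
    obtain ⟨U, hU, hvU, hUsub⟩ :=
      copy_through_aux hG (fun S' hS' => hm V' G hG S' hS') v (S.erase v) hvW hWcard
    refine ⟨U, ?_, hU⟩
    rwa [Finset.insert_erase hv] at hUsub

lemma oRamsey_spec (j : ℕ) {V' : Type} [Fintype V'] [DecidableEq V']
    {G : OrientedGraph V'} (hG : G.IsTournament) (S : Finset V')
    (hS : oRamsey j ≤ S.card) : ∃ U ⊆ S, G.IsTTCopy j U := by
  classical
  have hne : {m | ∀ G : OrientedGraph (Fin m), G.IsTournament → ∃ U, G.IsTTCopy j U}.Nonempty := by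
    obtain ⟨m, hm⟩ := ramseyAux j
    refine ⟨m, fun G' hG' => ?_⟩
    obtain ⟨U, -, hU⟩ := hm (Fin m) G' hG' Finset.univ (by simp)
    exact ⟨U, hU⟩
  have hmem := Nat.sInf_mem hne
  set r := oRamsey j with hrdef
  -- shrink S to exactly r elements
  obtain ⟨S₀, hS₀sub, hS₀card⟩ := Finset.exists_subset_card_eq hS
  have e : S₀ ≃ Fin r := by
    rw [← hS₀card]; exact S₀.equivFin
  set G' : OrientedGraph (Fin r) :=
    ⟨fun a b => G.adj (e.symm a : V') (e.symm b : V'),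
     fun a b h => G.asymm _ _ h⟩ with hG'def
  have hG'T : G'.IsTournament := by
    intro a b hab
    exact hG _ _ (fun h => hab (e.symm.injective (Subtype.ext h)))
  obtain ⟨U', f, -, hmono⟩ := hmem G' hG'T
  set g : Fin j → V' := fun i => (e.symm (f i) : V') with hgdef
  have hginj : Function.Injective g := by
    intro a b hab
    exact f.injective (e.symm.injective (Subtype.ext hab))
  refine ⟨Finset.univ.map ⟨g, hginj⟩, ?_, ⟨⟨g, hginj⟩, rfl, ?_⟩⟩
  · intro x hx
    simp only [Finset.mem_map, Finset.mem_univ, true_and] at hx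
    obtain ⟨i, rfl⟩ := hx
    exact hS₀sub (e.symm (f i)).2
  · intro i i' hlt
    exact hmono i i' hlt

/-- The oriented Ramsey number is at least `j` (for the transitive tournament reason). -/
lemma oRamsey_ge (j : ℕ) : j ≤ oRamsey j := by
  classical
  have hne : {m | ∀ G : OrientedGraph (Fin m), G.IsTournament → ∃ U, G.IsTTCopy j U}.Nonempty := by
    obtain ⟨m, hm⟩ := ramseyAux j
    refine ⟨m, fun G' hG' => ?_⟩
    obtain ⟨U, -, hU⟩ := hm (Fin m) G' hG' Finset.univ (by simp)
    exact ⟨U, hU⟩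
  have hmem := Nat.sInf_mem hne
  set r := oRamsey j with hrdef
  set Gt : OrientedGraph (Fin r) := ⟨fun a b => a < b, fun a b h h' => absurd h h'.asymm⟩
  have hGt : Gt.IsTournament := fun a b hab => hab.lt_or_gt
  obtain ⟨U, f, -, -⟩ := hmem Gt hGt
  simpa [hrdef, oRamsey] using Fintype.card_le_of_embedding f

end OrientedGraph

open OrientedGraph in
lemma exists_topset {V' : Type} [Fintype V'] [DecidableEq V'] (y : V' → ℝ) :
    ∀ m, m ≤ Fintype.card V' → ∃ B : Finset V', B.card = m ∧
      ∀ b ∈ B, ∀ t ∈ Bᶜ, y t ≤ y b := by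
  intro m
  induction m with
  | zero => exact fun _ => ⟨∅, rfl, by simp⟩
  | succ m ih =>
    intro hm
    obtain ⟨B, hBcard, hBtop⟩ := ih (by omega)
    have hcne : (Bᶜ : Finset V').Nonempty := by
      rw [← Finset.card_pos, Finset.card_compl, hBcard]; omega
    obtain ⟨t₀, ht₀mem, ht₀max⟩ := Finset.exists_max_image Bᶜ y hcne
    have ht₀B : t₀ ∉ B := by simpa using ht₀mem
    refine ⟨insert t₀ B, by rw [Finset.card_insert_of_notMem ht₀B, hBcard], ?_⟩
    intro b hb t ht
    have htB : t ∈ Bᶜ := by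
      simp only [Finset.mem_compl, Finset.mem_insert, not_or] at ht ⊢
      exact ht.2
    rcases Finset.mem_insert.1 hb with rfl | hb'
    · exact ht₀max t htB
    · exact hBtop b hb' t htB

open OrientedGraph in
lemma main_tiling {k : ℕ} (hk : 3 ≤ k) {r q n : ℕ} (hr : r = oRamsey (k - 1))
    (hq : q = 2 * r - k + 1) (hn : n = k * q)
    (G : OrientedGraph (Fin n)) (hG : G.IsTournament) : G.HasPerfectFracTiling k := by
  classical
  have hrk : k - 1 ≤ r := hr ▸ oRamsey_ge (k - 1)
  have hq2 : 2 ≤ q := by omega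
  have hn0 : 0 < n := hn ▸ Nat.mul_pos (by omega) (by omega)
  set ind : Finset (Fin n) → (Fin n → ℝ) := fun U v => if v ∈ U then 1 else 0 with hind
  have hindinj : Function.Injective ind := by
    intro U U' h
    ext v
    have := congrFun h v
    simp only [hind] at this
    by_cases h1 : v ∈ U <;> by_cases h2 : v ∈ U' <;> simp [h1, h2] at this ⊢
  set C : Finset (Finset (Fin n)) := Finset.univ.filter (fun U => G.IsTTCopy k U) with hC
  set t : Finset (Fin n → ℝ) := C.image ind with ht
  set x : Fin n → ℝ := fun _ => (k : ℝ) / n with hx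
  -- Step A: x is in the convex hull of the copy indicators
  have hxmem : x ∈ convexHull ℝ (t : Set (Fin n → ℝ)) := by
    by_contra hxm
    obtain ⟨f, u, hfu, hux⟩ := geometric_hahn_banach_closed_point
      (convex_convexHull ℝ _) ((t.finite_toSet.isCompact_convexHull ℝ).isClosed) hxm
    set y : Fin n → ℝ := fun v => f (Pi.single v 1) with hy
    have hfz : ∀ z : Fin n → ℝ, f z = ∑ v, z v * y v := by
      intro z
      have h1 : z = ∑ v : Fin n, z v • (Pi.single v 1 : Fin n → ℝ) := by
        conv_lhs => rw [← Finset.univ_sum_single z]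
        refine Finset.sum_congr rfl fun v _ => ?_
        funext w
        by_cases h : w = v <;> simp [Pi.single_apply, h]
      calc f z = f (∑ v : Fin n, z v • (Pi.single v 1 : Fin n → ℝ)) := by rw [← h1]
        _ = ∑ v, z v * y v := by
            rw [map_sum]
            exact Finset.sum_congr rfl fun v _ => by rw [map_smul, smul_eq_mul]
    have hcopy : ∀ U ∈ C, ∑ v ∈ U, y v < u := by
      intro U hUC
      have hmem : ind U ∈ convexHull ℝ (t : Set (Fin n → ℝ)) :=
        subset_convexHull ℝ _ (Finset.mem_coe.2 (Finset.mem_image_of_mem ind hUC))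
      have hlt := hfu _ hmem
      rw [hfz] at hlt
      have : ∑ v : Fin n, ind U v * y v = ∑ v ∈ U, y v := by
        simp only [hind, ite_mul, one_mul, zero_mul]
        rw [Finset.sum_ite_mem, Finset.univ_inter]
      linarith [this ▸ hlt]
    have hxval : u < ((k : ℝ) / n) * ∑ v, y v := by
      have : f x = ((k : ℝ) / n) * ∑ v, y v := by
        rw [hfz]; simp only [hx]; rw [Finset.mul_sum]
      linarith [this ▸ hux]
    -- top set
    obtain ⟨B, hBcard, hBtop⟩ := exists_topset y q
      (by rw [Fintype.card_fin, hn]; exact Nat.le_mul_of_pos_left q (by omega))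
    have hScard : (Bᶜ : Finset (Fin n)).card = (k - 1) * q := by
      rw [Finset.card_compl, hBcard, Fintype.card_fin, hn, Nat.sub_one_mul]
    -- combinatorial induction
    have key : ∀ jj : ℕ, ∀ B' ⊆ B, ∀ S' ⊆ Bᶜ, B'.card = jj → S'.card = (k - 1) * jj →
        ∑ v ∈ B', y v + ∑ v ∈ S', y v ≤ (jj : ℝ) * u := by
      intro jj
      induction jj with
      | zero =>
        intro B' _ S' _ hB'c hS'c
        have h1 : B' = ∅ := Finset.card_eq_zero.1 hB'c
        have h2 : S' = ∅ := Finset.card_eq_zero.1 (by rw [hS'c, Nat.mul_zero])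
        simp [h1, h2]
      | succ jj ih =>
        intro B' hB'sub S' hS'sub hB'c hS'c
        obtain ⟨b, hb⟩ : B'.Nonempty := Finset.card_pos.1 (by omega)
        have hbB : b ∈ B := hB'sub hb
        have hkS' : k - 1 ≤ S'.card := by
          rw [hS'c]; exact Nat.le_mul_of_pos_right _ (by omega)
        obtain ⟨A, hAsub, hAcard⟩ := Finset.exists_subset_card_eq hkS'
        have hAcompl : ∀ a ∈ A, a ∈ Bᶜ := fun a ha => hS'sub (hAsub ha)
        set W : Finset (Fin n) := (B.erase b) ∪ A with hW
        have hdisj : Disjoint (B.erase b) A := by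
          refine Finset.disjoint_left.2 fun a ha haA => ?_
          exact (Finset.mem_compl.1 (hAcompl a haA)) (Finset.mem_of_mem_erase ha)
        have hWcard : W.card = (q - 1) + (k - 1) := by
          rw [hW, Finset.card_union_of_disjoint hdisj,
            Finset.card_erase_of_mem hbB, hBcard, hAcard]
        have hbW : b ∉ W := by
          rw [hW, Finset.mem_union]
          rintro (h | h)
          · exact Finset.notMem_erase b B h
          · exact (Finset.mem_compl.1 (hAcompl b h)) hbB
        have h2r : 2 * oRamsey (k - 1) ≤ W.card + 1 := by
          rw [hWcard, ← hr]; omega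
        obtain ⟨U, hU, hbU, hUsub⟩ := copy_through_aux hG
          (fun S0 hS0 => oRamsey_spec (k - 1) hG S0 hS0) b W hbW h2r
        have hUk : G.IsTTCopy k U := by
          have hk1 : k - 1 + 1 = k := by omega
          rwa [hk1] at hU
        have hUC : U ∈ C := Finset.mem_filter.2 ⟨Finset.mem_univ _, hUk⟩
        have hUy : ∑ v ∈ U, y v < u := hcopy U hUC
        set X : Finset (Fin n) := U.erase b with hX
        have hXW : X ⊆ W := by
          intro z hz
          rcases Finset.mem_insert.1 (hUsub (Finset.mem_of_mem_erase hz)) with rfl | h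
          · exact absurd rfl (Finset.ne_of_mem_erase hz)
          · exact h
        have hXcard : X.card = k - 1 := by
          rw [hX, Finset.card_erase_of_mem hbU, isTTCopy_card hUk]
        have hsumAX : ∑ v ∈ A, y v ≤ ∑ v ∈ X, y v := by
          have hXA : (X \ A).card = (A \ X).card :=
            Finset.card_sdiff_comm (hXcard.trans hAcard.symm)
          have hXAB : X \ A ⊆ B := by
            intro z hz
            obtain ⟨hz1, hz2⟩ := Finset.mem_sdiff.1 hz
            rcases Finset.mem_union.1 (hXW hz1) with h | h
            · exact Finset.mem_of_mem_erase h
            · exact absurd h hz2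
          suffices h : ∑ v ∈ A \ X, y v ≤ ∑ v ∈ X \ A, y v by
            have e1 := Finset.sum_inter_add_sum_sdiff X A y
            have e2 := Finset.sum_inter_add_sum_sdiff A X y
            rw [Finset.inter_comm] at e2
            linarith
          rcases Finset.eq_empty_or_nonempty (X \ A) with hemp | hne
          · have h0 : A \ X = ∅ := Finset.card_eq_zero.1
              (by rw [← hXA, hemp, Finset.card_empty])
            simp [hemp, h0]
          · obtain ⟨x₀, hx₀mem, hx₀min⟩ := Finset.exists_min_image (X \ A) y hne
            have hb1 : ∑ v ∈ A \ X, y v ≤ (A \ X).card • y x₀ :=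
              Finset.sum_le_card_nsmul _ _ _ (fun a ha =>
                hBtop x₀ (hXAB hx₀mem) a
                  (hAcompl a (Finset.mem_sdiff.1 ha).1))
            have hb2 : (X \ A).card • y x₀ ≤ ∑ v ∈ X \ A, y v :=
              Finset.card_nsmul_le_sum _ _ _ hx₀min
            rw [hXA] at hb2
            linarith
        have hsplitU : y b + ∑ v ∈ X, y v = ∑ v ∈ U, y v :=
          Finset.add_sum_erase _ _ hbU
        have hstep : y b + ∑ v ∈ A, y v < u := by linarith
        have hB''c : (B'.erase b).card = jj := by
          rw [Finset.card_erase_of_mem hb, hB'c]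
          omega
        have hS''c : (S' \ A).card = (k - 1) * jj := by
          rw [Finset.card_sdiff_of_subset hAsub, hS'c, hAcard, Nat.mul_succ]
          omega
        have ihres := ih (B'.erase b) ((Finset.erase_subset _ _).trans hB'sub)
          (S' \ A) (Finset.sdiff_subset.trans hS'sub) hB''c hS''c
        have e3 : y b + ∑ v ∈ B'.erase b, y v = ∑ v ∈ B', y v :=
          Finset.add_sum_erase _ _ hb
        have e4 : ∑ v ∈ S' \ A, y v + ∑ v ∈ A, y v = ∑ v ∈ S', y v :=
          Finset.sum_sdiff hAsub
        push_cast
        linarith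
    have hfin := key q B (subset_refl B) Bᶜ (subset_refl _) hBcard hScard
    rw [Finset.sum_add_sum_compl] at hfin
    have hq0 : (0 : ℝ) < (q : ℝ) := by exact_mod_cast (by omega : 0 < q)
    have hlt2 : (q : ℝ) * u < (q : ℝ) * (((k : ℝ) / n) * ∑ v, y v) :=
      mul_lt_mul_of_pos_left hxval hq0
    have hncast : (n : ℝ) = (k : ℝ) * (q : ℝ) := by exact_mod_cast congrArg Nat.cast hn
    have hqkn : (q : ℝ) * ((k : ℝ) / (n : ℝ)) = 1 := by
      rw [hncast]
      field_simp
    have : (q : ℝ) * (((k : ℝ) / n) * ∑ v, y v) = ∑ v, y v := by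
      rw [← mul_assoc, hqkn, one_mul]
    linarith
  -- Step B: extract the weights
  rw [Finset.mem_convexHull] at hxmem
  obtain ⟨w, hw0, hw1, hwc⟩ := hxmem
  rw [Finset.centerMass_eq_of_sum_1 _ id hw1] at hwc
  have hindinjC : ∀ a ∈ C, ∀ b ∈ C, ind a = ind b → a = b := fun a _ b _ h => hindinj h
  have hcoord : ∀ v : Fin n, ∑ U ∈ C, (if v ∈ U then w (ind U) else 0) = (k : ℝ) / n := by
    intro v
    have := congrFun hwc v
    rw [Finset.sum_apply] at this
    rw [ht, Finset.sum_image hindinjC] at this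
    simp only [hx] at this
    rw [← this]
    refine Finset.sum_congr rfl fun U _ => ?_
    simp only [id, Pi.smul_apply, hind, smul_eq_mul]
    by_cases h : v ∈ U <;> simp [h]
  set w' : Finset (Fin n) → ℝ :=
    fun U => if G.IsTTCopy k U then ((n : ℝ) / k) * w (ind U) else 0 with hw'
  have hk0 : (0 : ℝ) < (k : ℝ) := by exact_mod_cast (by omega : 0 < k)
  have hn0' : (0 : ℝ) < (n : ℝ) := by exact_mod_cast hn0
  refine ⟨w', ⟨?_, ?_, ?_⟩, ?_⟩
  · intro U
    simp only [hw']
    split_ifs with h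
    · refine mul_nonneg (by positivity) (hw0 _ ?_)
      exact Finset.mem_image_of_mem ind (Finset.mem_filter.2 ⟨Finset.mem_univ _, h⟩)
    · exact le_refl 0
  · intro U hU
    simp only [hw', if_neg hU]
  · intro v
    have hcov : ∑ U ∈ Finset.univ.filter (fun U => v ∈ U), w' U = 1 := by
      rw [Finset.sum_filter]
      have step : ∀ U : Finset (Fin n),
          (if v ∈ U then w' U else 0)
            = ((n : ℝ) / k) * (if G.IsTTCopy k U then (if v ∈ U then w (ind U) else 0) else 0) := by
        intro U
        simp only [hw']
        split_ifs <;> ring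
      rw [Finset.sum_congr rfl (fun U _ => step U), ← Finset.mul_sum]
      have : ∑ U : Finset (Fin n),
          (if G.IsTTCopy k U then (if v ∈ U then w (ind U) else 0) else 0)
            = ∑ U ∈ C, (if v ∈ U then w (ind U) else 0) := by
        rw [hC, Finset.sum_filter]
      rw [this, hcoord v]
      field_simp
    rw [hcov]
  · have : ∑ U : Finset (Fin n), w' U = ((n : ℝ) / k) * ∑ U ∈ C, w (ind U) := by
      simp only [hw']
      rw [Finset.sum_ite, Finset.sum_const_zero, add_zero, ← Finset.mul_sum]
    rw [this]
    have : ∑ U ∈ C, w (ind U) = 1 := by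
      rw [← hw1, ht, Finset.sum_image hindinjC]
    rw [this, mul_one, Fintype.card_fin]

/-- For `k ≥ 3`, every tournament on `n = k·(2·r(k-1) - k + 1)` vertices has a perfect
fractional `T_k`-tiling; equivalently, `trs(k) ≤ k·(2·r(k-1) - k + 1)`. -/
theorem stmt_6 (k : ℕ) (hk : 3 ≤ k) :
    (∀ G : OrientedGraph (Fin (k * (2 * oRamsey (k - 1) - k + 1))), G.IsTournament →
      G.HasPerfectFracTiling k) ∧ trs k ≤ k * (2 * oRamsey (k - 1) - k + 1) := by
  have main : ∀ G : OrientedGraph (Fin (k * (2 * oRamsey (k - 1) - k + 1))),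
      G.IsTournament → G.HasPerfectFracTiling k :=
    fun G hG => main_tiling hk rfl rfl rfl G hG
  refine ⟨main, Nat.sInf_le ⟨?_, main⟩⟩
  have hrk := OrientedGraph.oRamsey_ge (k - 1)
  exact Nat.mul_pos (by omega) (by omega)
end

section
/- For every k ≥ 3, there exists a tournament on 2·r(k−1) − 1 vertices with no perfect fractional T_k-tiling; hence trs(k) ≥ 2·r(k−1). -/
open Finset

section Aux
namespace OG7

open OrientedGraph Finset

variable {V : Type*} {W : Type*}

def comap (ι : W → V) (G : OrientedGraph V) : OrientedGraph W where
  adj a b := G.adj (ι a) (ι b)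
  asymm _ _ h := G.asymm _ _ h

lemma comap_tour (ι : W ↪ V) (G : OrientedGraph V) (hG : G.IsTournament) :
    (comap ι G).IsTournament := fun a b hab => hG _ _ (fun h => hab (ι.injective h))

lemma copy_map (ι : W ↪ V) (G : OrientedGraph V) {j : ℕ} {U : Finset W}
    (h : (comap ι G).IsTTCopy j U) : G.IsTTCopy j (U.map ι) := by
  obtain ⟨f, hf, ha⟩ := h
  exact ⟨f.trans ι, by rw [← hf, Finset.map_map], fun i j hij => ha i j hij⟩

lemma mem_of_copy {G : OrientedGraph V} {j : ℕ} {U : Finset V}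
    (h : G.IsTTCopy j U) {f : Fin j ↪ V} (hf : Finset.univ.map f = U) (i : Fin j) :
    f i ∈ U := by
  rw [← hf]; exact Finset.mem_map_of_mem f (Finset.mem_univ i)

lemma copy_card {G : OrientedGraph V} {j : ℕ} {U : Finset V}
    (h : G.IsTTCopy j U) : U.card = j := by
  obtain ⟨f, hf, -⟩ := h
  rw [← hf, Finset.card_map, Finset.card_univ, Fintype.card_fin]

lemma copy_insert_pre [DecidableEq V] {G : OrientedGraph V} {j : ℕ} {U : Finset V}
    (h : G.IsTTCopy j U) {v : V} (hv : v ∉ U) (hadj : ∀ u ∈ U, G.adj v u) :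
    G.IsTTCopy (j+1) (insert v U) := by
  obtain ⟨f, hf, ha⟩ := h
  have hmem : ∀ i, f i ∈ U := fun i => by
    rw [← hf]; exact Finset.mem_map_of_mem f (Finset.mem_univ i)
  have hinj : Function.Injective (Fin.cases v (fun i => f i) : Fin (j+1) → V) := by
    intro a b hab
    induction a using Fin.cases with
    | zero =>
      induction b using Fin.cases with
      | zero => rfl
      | succ b => simp only [Fin.cases_zero, Fin.cases_succ] at hab
                  exact absurd (hab ▸ hmem b) hv
    | succ a =>
      induction b using Fin.cases with
      | zero => simp only [Fin.cases_zero, Fin.cases_succ] at hab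
                exact absurd (hab ▸ hmem a) hv
      | succ b => simp only [Fin.cases_succ] at hab
                  exact congrArg Fin.succ (f.injective hab)
  refine ⟨⟨_, hinj⟩, ?_, ?_⟩
  · ext x
    simp only [Finset.mem_map, Finset.mem_univ, true_and, Function.Embedding.coeFn_mk,
      Finset.mem_insert]
    constructor
    · rintro ⟨i, rfl⟩
      induction i using Fin.cases with
      | zero => left; rfl
      | succ i => right; exact hmem i
    · rintro (rfl | hx)
      · exact ⟨0, rfl⟩
      · rw [← hf] at hx
        obtain ⟨i, -, rfl⟩ := Finset.mem_map.1 hx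
        exact ⟨i.succ, rfl⟩
  · intro a b hab
    induction a using Fin.cases with
    | zero =>
      induction b using Fin.cases with
      | zero => exact absurd hab (lt_irrefl _)
      | succ b => exact hadj _ (hmem b)
    | succ a =>
      induction b using Fin.cases with
      | zero => exact absurd hab (Fin.not_lt_zero _)
      | succ b => exact ha a b (Fin.succ_lt_succ_iff.mp hab)

lemma copy_insert_post [DecidableEq V] {G : OrientedGraph V} {j : ℕ} {U : Finset V}
    (h : G.IsTTCopy j U) {v : V} (hv : v ∉ U) (hadj : ∀ u ∈ U, G.adj u v) :
    G.IsTTCopy (j+1) (insert v U) := by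
  obtain ⟨f, hf, ha⟩ := h
  have hmem : ∀ i, f i ∈ U := fun i => by
    rw [← hf]; exact Finset.mem_map_of_mem f (Finset.mem_univ i)
  have hinj : Function.Injective (Fin.lastCases v (fun i => f i) : Fin (j+1) → V) := by
    intro a b hab
    induction a using Fin.lastCases with
    | last =>
      induction b using Fin.lastCases with
      | last => rfl
      | cast b => simp only [Fin.lastCases_last, Fin.lastCases_castSucc] at hab
                  exact absurd (hab ▸ hmem b) hv
    | cast a =>
      induction b using Fin.lastCases with
      | last => simp only [Fin.lastCases_last, Fin.lastCases_castSucc] at hab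
                exact absurd (hab ▸ hmem a) hv
      | cast b => simp only [Fin.lastCases_castSucc] at hab
                  exact congrArg Fin.castSucc (f.injective hab)
  refine ⟨⟨_, hinj⟩, ?_, ?_⟩
  · ext x
    simp only [Finset.mem_map, Finset.mem_univ, true_and, Function.Embedding.coeFn_mk,
      Finset.mem_insert]
    constructor
    · rintro ⟨i, rfl⟩
      induction i using Fin.lastCases with
      | last => left; simp
      | cast i => right; simpa using hmem i
    · rintro (rfl | hx)
      · exact ⟨Fin.last j, by simp⟩
      · rw [← hf] at hx
        obtain ⟨i, -, rfl⟩ := Finset.mem_map.1 hx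
        exact ⟨i.castSucc, by simp⟩
  · intro a b hab
    induction a using Fin.lastCases with
    | last =>
      induction b using Fin.lastCases with
      | last => exact absurd hab (lt_irrefl _)
      | cast b => exact absurd hab (not_lt.mpr (Fin.castSucc_lt_last b).le)
    | cast a =>
      induction b using Fin.lastCases with
      | last =>
          simp only [Function.Embedding.coeFn_mk, Fin.lastCases_castSucc, Fin.lastCases_last]
          exact hadj _ (hmem a)
      | cast b =>
          simp only [Function.Embedding.coeFn_mk, Fin.lastCases_castSucc]
          exact ha a b (Fin.castSucc_lt_castSucc_iff.mp hab)

end OG7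
end Aux
section Aux2
namespace OG7
open OrientedGraph Finset

universe u
variable {V : Type u}

lemma ramsey_upper (j : ℕ) : ∀ {V : Type u} [Fintype V] [DecidableEq V]
    (G : OrientedGraph V), G.IsTournament → 2^j ≤ Fintype.card V →
    ∃ U, G.IsTTCopy j U := by
  induction j with
  | zero =>
    intro V _ _ G _ _
    refine ⟨∅, Function.Embedding.ofIsEmpty, by simp, fun i => i.elim0⟩
  | succ j ih =>
    intro V _ _ G hG hcard
    have hpos : 0 < Fintype.card V := lt_of_lt_of_le (Nat.pow_pos (by norm_num)) hcard
    obtain ⟨v⟩ := Fintype.card_pos_iff.mp hpos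
    classical
    set O : Finset V := univ.filter (fun u => G.adj v u) with hO
    set I : Finset V := univ.filter (fun u => G.adj u v) with hI
    have hsub : univ.erase v ⊆ O ∪ I := by
      intro u hu
      rw [Finset.mem_erase] at hu
      rcases hG u v hu.1 with h | h
      · exact Finset.mem_union_right _ (by simp [hI, h])
      · exact Finset.mem_union_left _ (by simp [hO, h])
    have hcards : Fintype.card V - 1 ≤ O.card + I.card := by
      calc Fintype.card V - 1 = (univ.erase v).card := by
            rw [Finset.card_erase_of_mem (Finset.mem_univ v), Finset.card_univ]
        _ ≤ (O ∪ I).card := Finset.card_le_card hsub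
        _ ≤ O.card + I.card := Finset.card_union_le _ _
    have hbig : 2^j ≤ O.card ∨ 2^j ≤ I.card := by
      by_contra h
      push_neg at h
      have h2 : 2^(j+1) = 2 * 2^j := by rw [pow_succ]; ring
      omega
    have key : ∀ (S : Finset V), 2^j ≤ S.card → v ∉ S →
        ∃ U : Finset V, G.IsTTCopy j U ∧ U ⊆ S := by
      intro S hS hvS
      have hts : ((comap (Function.Embedding.subtype (· ∈ S)) G)).IsTournament :=
        comap_tour _ _ hG
      obtain ⟨U', hU'⟩ := ih (comap (Function.Embedding.subtype (· ∈ S)) G) hts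
        (by simpa [Fintype.card_coe] using hS)
      refine ⟨U'.map (Function.Embedding.subtype (· ∈ S)), copy_map _ _ hU', ?_⟩
      intro x hx
      obtain ⟨y, -, rfl⟩ := Finset.mem_map.1 hx
      exact y.2
    rcases hbig with hb | hb
    · have hvO : v ∉ O := by
        simp only [hO, Finset.mem_filter]
        exact fun h => G.asymm v v h.2 h.2
      obtain ⟨U, hU, hUS⟩ := key O hb hvO
      have hvU : v ∉ U := fun h => hvO (hUS h)
      refine ⟨insert v U, copy_insert_pre hU hvU ?_⟩
      intro u hu
      have := hUS hu
      rw [hO, Finset.mem_filter] at this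
      exact this.2
    · have hvI : v ∉ I := by
        simp only [hI, Finset.mem_filter]
        exact fun h => G.asymm v v h.2 h.2
      obtain ⟨U, hU, hUS⟩ := key I hb hvI
      have hvU : v ∉ U := fun h => hvI (hUS h)
      refine ⟨insert v U, copy_insert_post hU hvU ?_⟩
      intro u hu
      have := hUS hu
      rw [hI, Finset.mem_filter] at this
      exact this.2

lemma ramseySet_nonempty (j : ℕ) :
    {m | ∀ G : OrientedGraph (Fin m), G.IsTournament → ∃ U, G.IsTTCopy j U}.Nonempty :=
  ⟨2^j, fun G hG => ramsey_upper j G hG (by simp)⟩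

lemma oRamsey_spec (j : ℕ) (G : OrientedGraph (Fin (oRamsey j))) (hG : G.IsTournament) :
    ∃ U, G.IsTTCopy j U :=
  Nat.sInf_mem (ramseySet_nonempty j) G hG

lemma oRamsey_pos {j : ℕ} (hj : 1 ≤ j) : 1 ≤ oRamsey j := by
  rcases Nat.eq_zero_or_pos (oRamsey j) with h | h
  · exfalso
    have h0 : (0 : ℕ) ∈ {m | ∀ G : OrientedGraph (Fin m), G.IsTournament →
        ∃ U, G.IsTTCopy j U} := h ▸ Nat.sInf_mem (ramseySet_nonempty j)
    obtain ⟨U, f, -, -⟩ := h0 ⟨fun _ _ => False, fun _ _ h => h.elim⟩ (fun u => u.elim0)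
    exact (f ⟨0, hj⟩).elim0
  · exact h

lemma copy_in_subset [Fintype V] [DecidableEq V] {G : OrientedGraph V}
    (hG : G.IsTournament) (j : ℕ) (S : Finset V) (hS : oRamsey j ≤ S.card) :
    ∃ U, G.IsTTCopy j U ∧ U ⊆ S := by
  let ι : Fin (oRamsey j) ↪ V :=
    (Fin.castLEEmb hS).trans (S.equivFin.symm.toEmbedding.trans
      (Function.Embedding.subtype (· ∈ S)))
  obtain ⟨U₀, hU₀⟩ := oRamsey_spec j (comap ι G) (comap_tour ι G hG)
  refine ⟨U₀.map ι, copy_map ι G hU₀, ?_⟩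
  intro x hx
  obtain ⟨y, -, rfl⟩ := Finset.mem_map.1 hx
  exact (S.equivFin.symm (Fin.castLE hS y)).2

lemma vertex_in_copy [Fintype V] [DecidableEq V] {G : OrientedGraph V}
    (hG : G.IsTournament) {k : ℕ} (hk : 2 ≤ k) (v : V) (Q : Finset V) (hv : v ∉ Q)
    (hQ : 2 * oRamsey (k-1) - 1 ≤ Q.card) :
    ∃ C, G.IsTTCopy k C ∧ v ∈ C ∧ C ⊆ insert v Q := by
  classical
  set O : Finset V := Q.filter (fun u => G.adj v u) with hO
  set I : Finset V := Q.filter (fun u => G.adj u v) with hI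
  have hsub : Q ⊆ O ∪ I := by
    intro u hu
    rcases hG u v (fun h => hv (h ▸ hu)) with h | h
    · exact Finset.mem_union_right _ (by simp [hI, hu, h])
    · exact Finset.mem_union_left _ (by simp [hO, hu, h])
  have hcards : Q.card ≤ O.card + I.card :=
    le_trans (Finset.card_le_card hsub) (Finset.card_union_le _ _)
  have hr : 1 ≤ oRamsey (k-1) := oRamsey_pos (by omega)
  have hbig : oRamsey (k-1) ≤ O.card ∨ oRamsey (k-1) ≤ I.card := by
    rcases le_or_gt (oRamsey (k-1)) O.card with h | h
    · exact Or.inl h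
    · exact Or.inr (by omega)
  have hk' : k - 1 + 1 = k := by omega
  rcases hbig with hb | hb
  · obtain ⟨U, hU, hUS⟩ := copy_in_subset hG (k-1) O hb
    have hvU : v ∉ U := fun h => by
      have := hUS h; rw [hO, Finset.mem_filter] at this; exact hv this.1
    refine ⟨insert v U, ?_, Finset.mem_insert_self _ _, ?_⟩
    · rw [← hk']
      refine copy_insert_pre hU hvU ?_
      intro u hu
      have := hUS hu; rw [hO, Finset.mem_filter] at this; exact this.2
    · intro x hx
      rcases Finset.mem_insert.1 hx with rfl | hx
      · exact Finset.mem_insert_self _ _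
      · exact Finset.mem_insert_of_mem ((Finset.filter_subset _ _) (hUS hx))
  · obtain ⟨U, hU, hUS⟩ := copy_in_subset hG (k-1) I hb
    have hvU : v ∉ U := fun h => by
      have := hUS h; rw [hI, Finset.mem_filter] at this; exact hv this.1
    refine ⟨insert v U, ?_, Finset.mem_insert_self _ _, ?_⟩
    · rw [← hk']
      refine copy_insert_post hU hvU ?_
      intro u hu
      have := hUS hu; rw [hI, Finset.mem_filter] at this; exact this.2
    · intro x hx
      rcases Finset.mem_insert.1 hx with rfl | hx
      · exact Finset.mem_insert_self _ _
      · exact Finset.mem_insert_of_mem ((Finset.filter_subset _ _) (hUS hx))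

end OG7
end Aux2
section Aux3
namespace OG7
open OrientedGraph Finset

variable {V : Type*} {W : Type*}

lemma double_count [Fintype V] [DecidableEq V] (w : Finset V → ℝ) :
    ∑ v : V, ∑ U ∈ Finset.univ.filter (fun U => v ∈ U), w U
      = ∑ U : Finset V, (U.card : ℝ) * w U := by
  have : ∀ v : V, ∑ U ∈ Finset.univ.filter (fun U => v ∈ U), w U
      = ∑ U : Finset V, if v ∈ U then w U else 0 := fun v =>
    (Finset.sum_filter _ _)
  simp only [this]
  rw [Finset.sum_comm]
  refine Finset.sum_congr rfl (fun U _ => ?_)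
  rw [Finset.sum_ite_mem, Finset.univ_inter, Finset.sum_const, nsmul_eq_mul]

lemma no_pft_of_uncovered [Fintype V] [DecidableEq V] {G : OrientedGraph V} {k : ℕ}
    (hk : 0 < k) (x : V) (hx : ∀ U, G.IsTTCopy k U → x ∉ U) :
    ¬ G.HasPerfectFracTiling k := by
  rintro ⟨w, ⟨hpos, hzero, hload⟩, htot⟩
  set n := Fintype.card V with hn
  have hn1 : 1 ≤ n := Fintype.card_pos_iff.mpr ⟨x⟩
  have hxload : ∑ U ∈ Finset.univ.filter (fun U => x ∈ U), w U = 0 := by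
    refine Finset.sum_eq_zero (fun U hU => ?_)
    rw [Finset.mem_filter] at hU
    refine hzero U (fun hcopy => hx U hcopy hU.2)
  have hcardsum : ∑ U : Finset V, (U.card : ℝ) * w U = n := by
    have : ∀ U : Finset V, (U.card : ℝ) * w U = k * w U := by
      intro U
      by_cases h : w U = 0
      · rw [h, mul_zero, mul_zero]
      · have hcopy : G.IsTTCopy k U := by
          by_contra hc; exact h (hzero U hc)
        rw [copy_card hcopy]
    have hk0 : (k:ℝ) ≠ 0 := Nat.cast_ne_zero.mpr (by omega)
    calc ∑ U : Finset V, (U.card : ℝ) * w U = ∑ U : Finset V, (k:ℝ) * w U :=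
          Finset.sum_congr rfl (fun U _ => this U)
      _ = (k:ℝ) * ((n:ℝ)/(k:ℝ)) := by rw [← Finset.mul_sum, htot]
      _ = (n:ℝ) := by rw [mul_comm, div_mul_cancel₀ _ hk0]
  have hsum : (n : ℝ) = ∑ v : V, ∑ U ∈ Finset.univ.filter (fun U => v ∈ U), w U := by
    rw [double_count, hcardsum]
  have hbound : ∑ v : V, ∑ U ∈ Finset.univ.filter (fun U => v ∈ U), w U
      ≤ (n - 1 : ℕ) := by
    rw [← Finset.sum_erase_add _ _ (Finset.mem_univ x), hxload, add_zero]
    calc ∑ v ∈ Finset.univ.erase x, ∑ U ∈ Finset.univ.filter (fun U => v ∈ U), w U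
        ≤ ∑ v ∈ Finset.univ.erase x, (1:ℝ) :=
          Finset.sum_le_sum (fun v _ => hload v)
      _ = ((n - 1 : ℕ) : ℝ) := by
          rw [Finset.sum_const, nsmul_eq_mul, mul_one,
            Finset.card_erase_of_mem (Finset.mem_univ x), Finset.card_univ]
  rw [← hsum] at hbound
  have : ((n - 1 : ℕ) : ℝ) = (n : ℝ) - 1 := by
    push_cast [Nat.cast_sub hn1]; ring
  rw [this] at hbound
  linarith

/-- The three-block construction: `Fin a` (T-free) → center → `Fin b` (T-free) → `Fin a`. -/
def blockG {a b : ℕ} (Ga : OrientedGraph (Fin a)) (Gb : OrientedGraph (Fin b)) :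
    OrientedGraph (Fin a ⊕ (Unit ⊕ Fin b)) where
  adj x y :=
    match x, y with
    | .inl i, .inl j => Ga.adj i j
    | .inl _, .inr (.inl _) => True
    | .inl _, .inr (.inr _) => False
    | .inr (.inl _), .inl _ => False
    | .inr (.inl _), .inr (.inl _) => False
    | .inr (.inl _), .inr (.inr _) => True
    | .inr (.inr _), .inl _ => True
    | .inr (.inr _), .inr (.inl _) => False
    | .inr (.inr i), .inr (.inr j) => Gb.adj i j
  asymm := by
    rintro (i | u | i) (j | u' | j) h <;>
      first
        | exact Ga.asymm _ _ h
        | exact Gb.asymm _ _ h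
        | exact h.elim
        | exact fun hf => hf

lemma blockG_tour {a b : ℕ} {Ga : OrientedGraph (Fin a)} {Gb : OrientedGraph (Fin b)}
    (hGa : Ga.IsTournament) (hGb : Gb.IsTournament) : (blockG Ga Gb).IsTournament := by
  rintro (i | u | i) (j | u' | j) hne
  · exact hGa i j (fun h => hne (congrArg Sum.inl h))
  · exact Or.inl trivial
  · exact Or.inr trivial
  · exact Or.inr trivial
  · exact absurd rfl hne
  · exact Or.inl trivial
  · exact Or.inl trivial
  · exact Or.inr trivial
  · exact hGb i j (fun h => hne (congrArg (Sum.inr ∘ Sum.inr) h))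

lemma blockG_no_copy {a b m : ℕ} {Ga : OrientedGraph (Fin a)} {Gb : OrientedGraph (Fin b)}
    (hfa : ∀ U, ¬ Ga.IsTTCopy m U) (hfb : ∀ U, ¬ Gb.IsTTCopy m U)
    (U : Finset (Fin a ⊕ (Unit ⊕ Fin b)))
    (hU : (blockG Ga Gb).IsTTCopy (m+1) U) :
    (Sum.inr (Sum.inl ()) : Fin a ⊕ (Unit ⊕ Fin b)) ∉ U := by
  intro hx
  obtain ⟨f, hmap, hadj⟩ := hU
  rw [← hmap, Finset.mem_map] at hx
  obtain ⟨p, -, hp⟩ := hx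
  by_cases hB : ∃ c v, f c = Sum.inr (Sum.inr v)
  · by_cases hA : ∃ i u, f i = Sum.inl u
    · obtain ⟨i, u, hi⟩ := hA
      obtain ⟨c, v, hc⟩ := hB
      have hip : i < p := by
        rcases lt_trichotomy i p with h | h | h
        · exact h
        · exact absurd (h ▸ hi) (by rw [hp]; simp)
        · have := hadj p i h
          rw [hp, hi] at this
          exact this.elim
      have hpc : p < c := by
        rcases lt_trichotomy p c with h | h | h
        · exact h
        · exact absurd (h ▸ hp) (by rw [hc]; simp)
        · have := hadj c p h
          rw [hp, hc] at this
          exact this.elim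
      have := hadj i c (lt_trans hip hpc)
      rw [hi, hc] at this
      exact this.elim
    · -- all non-p indices land in Fin b
      have hall : ∀ i : Fin m, ∃ u, f (p.succAbove i) = Sum.inr (Sum.inr u) := by
        intro i
        have hne : p.succAbove i ≠ p := Fin.succAbove_ne p i
        rcases h : f (p.succAbove i) with u | w | w
        · exact absurd ⟨_, _, h⟩ hA
        · exact absurd (f.injective (h.trans (by rw [hp]))) hne
        · exact ⟨w, rfl⟩
      choose g hg using hall
      have ginj : Function.Injective g := by
        intro i j hij
        have : f (p.succAbove i) = f (p.succAbove j) := by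
          rw [hg i, hg j, hij]
        exact Fin.succAbove_right_injective (f.injective this)
      refine hfb (Finset.univ.map ⟨g, ginj⟩) ⟨⟨g, ginj⟩, rfl, ?_⟩
      intro i j hij
      have := hadj (p.succAbove i) (p.succAbove j)
        ((Fin.succAbove_lt_succAbove_iff).mpr hij)
      rw [hg i, hg j] at this
      exact this
  · -- all non-p indices land in Fin a
    have hall : ∀ i : Fin m, ∃ u, f (p.succAbove i) = Sum.inl u := by
      intro i
      have hne : p.succAbove i ≠ p := Fin.succAbove_ne p i
      rcases h : f (p.succAbove i) with u | w | w
      · exact ⟨u, rfl⟩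
      · exact absurd (f.injective (h.trans (by rw [hp]))) hne
      · exact absurd ⟨_, _, h⟩ hB
    choose g hg using hall
    have ginj : Function.Injective g := by
      intro i j hij
      have : f (p.succAbove i) = f (p.succAbove j) := by
        rw [hg i, hg j, hij]
      exact Fin.succAbove_right_injective (f.injective this)
    refine hfa (Finset.univ.map ⟨g, ginj⟩) ⟨⟨g, ginj⟩, rfl, ?_⟩
    intro i j hij
    have := hadj (p.succAbove i) (p.succAbove j)
      ((Fin.succAbove_lt_succAbove_iff).mpr hij)
    rw [hg i, hg j] at this
    exact this

end OG7
end Aux3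
section Aux4
namespace OG7
open OrientedGraph Finset

variable {V : Type*} {W : Type*}

lemma pft_equiv [Fintype V] [DecidableEq V] [Fintype W] [DecidableEq W]
    (e : V ≃ W) (G : OrientedGraph W) {k : ℕ}
    (h : (comap e.toEmbedding G).HasPerfectFracTiling k) : G.HasPerfectFracTiling k := by
  obtain ⟨w, ⟨h0, h1, h2⟩, htot⟩ := h
  set E : Finset V ≃ Finset W := e.finsetCongr with hE
  have hEapp : ∀ S : Finset V, E S = S.map e.toEmbedding := fun S => rfl
  refine ⟨fun T => w (E.symm T), ⟨fun T => h0 _, ?_, ?_⟩, ?_⟩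
  · intro T hT
    refine h1 _ (fun hcopy => hT ?_)
    have := copy_map e.toEmbedding G hcopy
    rwa [← hEapp, E.apply_symm_apply] at this
  · intro v
    have hrw : ∀ (x : V) (T : Finset W), x ∈ E.symm T ↔ e x ∈ T := by
      intro x T
      rw [hE]
      simp [Equiv.finsetCongr]
    calc ∑ T ∈ Finset.univ.filter (fun T => v ∈ T), w (E.symm T)
        = ∑ T : Finset W, if v ∈ T then w (E.symm T) else 0 := Finset.sum_filter _ _
      _ = ∑ S : Finset V, if v ∈ E S then w S else 0 := by
          refine (Fintype.sum_equiv E _ _ (fun S => ?_)).symm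
          rw [E.symm_apply_apply]
      _ = ∑ S : Finset V, if e.symm v ∈ S then w S else 0 := by
          refine Finset.sum_congr rfl (fun S _ => ?_)
          simp only [hEapp, Finset.mem_map_equiv]
      _ = ∑ S ∈ Finset.univ.filter (fun S => e.symm v ∈ S), w S :=
          (Finset.sum_filter _ _).symm
      _ ≤ 1 := h2 _
  · calc ∑ T : Finset W, w (E.symm T) = ∑ S : Finset V, w S :=
        (Fintype.sum_equiv E _ _ (fun S => by rw [E.symm_apply_apply])).symm
    _ = (Fintype.card V : ℝ) / k := htot
    _ = (Fintype.card W : ℝ) / k := by rw [Fintype.card_congr e]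

lemma exists_bad_tournament (k : ℕ) (hk : 3 ≤ k) (n : ℕ) (h1 : 1 ≤ n)
    (h2 : n ≤ 2 * oRamsey (k-1) - 1) :
    ∃ G : OrientedGraph (Fin n), G.IsTournament ∧ ¬ G.HasPerfectFracTiling k := by
  classical
  set r := oRamsey (k-1) with hr
  have hr1 : 1 ≤ r := oRamsey_pos (by omega)
  -- a tournament on r-1 vertices with no T_{k-1}
  have hout : (r - 1) ∉ {m | ∀ G : OrientedGraph (Fin m), G.IsTournament →
      ∃ U, G.IsTTCopy (k-1) U} := by
    intro hmem
    have : r ≤ r - 1 := Nat.sInf_le hmem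
    omega
  rw [Set.mem_setOf_eq] at hout
  push_neg at hout
  obtain ⟨G₀, hG₀t, hG₀free⟩ := hout
  have hG₀free' : ∀ U, ¬ G₀.IsTTCopy (k-1) U := hG₀free
  set a := min (r-1) (n-1) with ha
  set b := n - 1 - a with hb
  have hab : a + (1 + b) = n := by omega
  have haa : a ≤ r - 1 := min_le_left _ _
  have hbb : b ≤ r - 1 := by omega
  set Ga : OrientedGraph (Fin a) := comap (Fin.castLEEmb haa) G₀ with hGa
  set Gb : OrientedGraph (Fin b) := comap (Fin.castLEEmb hbb) G₀ with hGb
  have hGat : Ga.IsTournament := comap_tour _ _ hG₀t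
  have hGbt : Gb.IsTournament := comap_tour _ _ hG₀t
  have hGaf : ∀ U, ¬ Ga.IsTTCopy (k-1) U :=
    fun U hU => hG₀free' _ (copy_map _ _ hU)
  have hGbf : ∀ U, ¬ Gb.IsTTCopy (k-1) U :=
    fun U hU => hG₀free' _ (copy_map _ _ hU)
  have hcard : Fintype.card (Fin n) = Fintype.card (Fin a ⊕ (Unit ⊕ Fin b)) := by
    simp [Fintype.card_sum]
    omega
  set e : Fin n ≃ (Fin a ⊕ (Unit ⊕ Fin b)) := Fintype.equivOfCardEq hcard with he
  refine ⟨comap e.toEmbedding (blockG Ga Gb),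
    comap_tour _ _ (blockG_tour hGat hGbt), ?_⟩
  intro hpft
  have hpft' : (blockG Ga Gb).HasPerfectFracTiling k := pft_equiv e _ hpft
  have hm : k - 1 + 1 = k := by omega
  refine no_pft_of_uncovered (by omega) (Sum.inr (Sum.inl ())) ?_ hpft'
  intro U hU
  refine blockG_no_copy hGaf hGbf U ?_
  rwa [hm]
end OG7
end Aux4
section Aux5
namespace OG7
open OrientedGraph Finset

variable {V : Type*}

lemma dual_claim (k : ℕ) (hk : 3 ≤ k) [Fintype V] [DecidableEq V]
    {G : OrientedGraph V} (hG : G.IsTournament)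
    (hn : (oRamsey k - 1) * (k-1) + oRamsey k + 2 * oRamsey (k-1) ≤ Fintype.card V)
    (y : V → ℝ) (hy : ∀ U, G.IsTTCopy k U → ∑ v ∈ U, y v ≤ 0) :
    ∑ v : V, y v ≤ 0 := by
  classical
  have hrk1 : 1 ≤ oRamsey k := oRamsey_pos (by omega)
  have hr'1 : 1 ≤ oRamsey (k-1) := oRamsey_pos (by omega)
  set n := Fintype.card V with hnn
  have hnrk : oRamsey k + 2 * oRamsey (k-1) ≤ n := le_trans (by omega) hn
  set P : Finset V := univ.filter (fun v => 0 < y v) with hP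
  -- few positive vertices
  have hPcard : P.card ≤ oRamsey k - 1 := by
    by_contra hc
    push_neg at hc
    have hPk : oRamsey k ≤ P.card := by omega
    obtain ⟨U, hU, hUP⟩ := copy_in_subset hG k P hPk
    have hUpos : 0 < ∑ v ∈ U, y v := by
      refine Finset.sum_pos (fun v hv => ?_) ?_
      · have := hUP hv
        rw [hP, Finset.mem_filter] at this
        exact this.2
      · rw [← Finset.card_pos, copy_card hU]; omega
    exact absurd (hy U hU) (by linarith)
  set C : Finset V := univ \ P with hC
  have hCy : ∀ v ∈ C, y v ≤ 0 := by
    intro v hv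
    rw [hC, Finset.mem_sdiff, hP, Finset.mem_filter] at hv
    push_neg at hv
    exact hv.2 (Finset.mem_univ v)
  have hCcard : n - (oRamsey k - 1) ≤ C.card := by
    rw [hC, Finset.card_sdiff_of_subset (Finset.subset_univ P), Finset.card_univ]
    omega
  -- choose Q ⊆ C of size 2r'-1 with maximum y-sum
  have hQex : (C.powersetCard (2 * oRamsey (k-1) - 1)).Nonempty := by
    rw [Finset.powersetCard_nonempty]
    omega
  obtain ⟨Q, hQmem, hQmax⟩ := Finset.exists_max_image _ (fun S => ∑ v ∈ S, y v) hQex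
  rw [Finset.mem_powersetCard] at hQmem
  obtain ⟨hQC, hQcard⟩ := hQmem
  have hQne : Q.Nonempty := by
    rw [← Finset.card_pos, hQcard]; omega
  obtain ⟨q0, hq0Q, hq0min⟩ := Finset.exists_min_image Q y hQne
  set M : ℝ := - y q0 with hM
  have hq0C : q0 ∈ C := hQC hq0Q
  have hMnn : 0 ≤ M := by
    have := hCy q0 hq0C
    rw [hM]; linarith
  -- exchange: everything in C outside Q is at most y q0
  have hexch : ∀ u ∈ C \ Q, y u ≤ y q0 := by
    intro u hu
    rw [Finset.mem_sdiff] at hu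
    by_contra hcon
    push_neg at hcon
    have huQ' : u ∉ Q.erase q0 := fun h => hu.2 (Finset.mem_of_mem_erase h)
    set S : Finset V := insert u (Q.erase q0) with hS
    have hSC : S ∈ C.powersetCard (2 * oRamsey (k-1) - 1) := by
      rw [Finset.mem_powersetCard]
      constructor
      · intro x hx
        rw [hS, Finset.mem_insert] at hx
        rcases hx with rfl | hx
        · exact hu.1
        · exact hQC (Finset.mem_of_mem_erase hx)
      · rw [hS, Finset.card_insert_of_notMem huQ',
          Finset.card_erase_of_mem hq0Q, hQcard]
        omega
    have hSsum : ∑ v ∈ Q, y v < ∑ v ∈ S, y v := by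
      rw [hS, Finset.sum_insert huQ']
      have : ∑ v ∈ Q, y v = y q0 + ∑ v ∈ Q.erase q0, y v :=
        (Finset.add_sum_erase Q y hq0Q).symm
      rw [this]
      linarith
    exact absurd (hQmax S hSC) (by linarith)
  -- every positive vertex is bounded by (k-1) * M
  have hPosBound : ∀ v ∈ P, y v ≤ (k-1 : ℕ) * M := by
    intro v hv
    have hvQ : v ∉ Q := by
      intro h
      have := hCy v (hQC h)
      rw [hP, Finset.mem_filter] at hv
      linarith [hv.2]
    obtain ⟨Cv, hCv, hvCv, hCvsub⟩ := vertex_in_copy hG (k := k) (by omega) v Q hvQ (by omega)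
    have hCvsum := hy Cv hCv
    have hCvcard : Cv.card = k := copy_card hCv
    have herase : ((k-1 : ℕ) : ℝ) * y q0 ≤ ∑ u ∈ Cv.erase v, y u := by
      have hbound : ∀ u ∈ Cv.erase v, y q0 ≤ y u := by
        intro u hu
        have huQ : u ∈ Q := by
          have h1 := hCvsub (Finset.mem_of_mem_erase hu)
          rw [Finset.mem_insert] at h1
          rcases h1 with rfl | h1
          · exact absurd rfl (Finset.ne_of_mem_erase hu)
          · exact h1
        exact hq0min u huQ
      have := Finset.card_nsmul_le_sum (Cv.erase v) y (y q0) hbound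
      rwa [Finset.card_erase_of_mem hvCv, hCvcard, nsmul_eq_mul] at this
    have hsplit : ∑ u ∈ Cv, y u = y v + ∑ u ∈ Cv.erase v, y u :=
      (Finset.add_sum_erase Cv y hvCv).symm
    rw [hM]
    have : y v + ((k-1:ℕ):ℝ) * y q0 ≤ 0 := by
      rw [hsplit] at hCvsum
      linarith
    linarith
  -- assemble
  have hsplit : ∑ v : V, y v = ∑ v ∈ P, y v + ∑ v ∈ C, y v := by
    rw [hC, hP]
    rw [← Finset.sum_filter_add_sum_filter_not univ (fun v => 0 < y v) y]
    congr 1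
    congr 1
    ext v
    simp [Finset.mem_sdiff]
  have hPsum : ∑ v ∈ P, y v ≤ ((oRamsey k - 1 : ℕ) : ℝ) * ((k-1 : ℕ) * M) := by
    calc ∑ v ∈ P, y v ≤ P.card • ((k-1 : ℕ) * M) :=
          Finset.sum_le_card_nsmul P y _ hPosBound
      _ = (P.card : ℝ) * ((k-1 : ℕ) * M) := by rw [nsmul_eq_mul]
      _ ≤ ((oRamsey k - 1 : ℕ) : ℝ) * ((k-1 : ℕ) * M) := by
          refine mul_le_mul_of_nonneg_right ?_ (by positivity)
          exact_mod_cast hPcard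
  have hCsplit : ∑ v ∈ C, y v = ∑ v ∈ Q, y v + ∑ v ∈ C \ Q, y v := by
    rw [← Finset.sum_sdiff hQC]; ring
  have hQsum : ∑ v ∈ Q, y v ≤ 0 :=
    Finset.sum_nonpos (fun v hv => hCy v (hQC hv))
  have hRcard : (oRamsey k - 1) * (k-1) ≤ (C \ Q).card := by
    rw [Finset.card_sdiff_of_subset hQC, hQcard]
    omega
  have hRsum : ∑ v ∈ C \ Q, y v ≤ ((oRamsey k - 1) * (k-1) : ℕ) * (y q0) := by
    calc ∑ v ∈ C \ Q, y v ≤ (C \ Q).card • (y q0) :=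
          Finset.sum_le_card_nsmul _ y _ hexch
      _ = ((C \ Q).card : ℝ) * (y q0) := by rw [nsmul_eq_mul]
      _ ≤ ((oRamsey k - 1) * (k-1) : ℕ) * (y q0) := by
          refine mul_le_mul_of_nonpos_right ?_ (by rw [hM] at hMnn; linarith)
          exact_mod_cast hRcard
  have hfinal : ((oRamsey k - 1 : ℕ) : ℝ) * ((k-1 : ℕ) * M) + ((oRamsey k - 1) * (k-1) : ℕ) * (y q0) = 0 := by
    push_cast
    rw [hM]
    ring
  rw [hsplit, hCsplit]
  linarith

end OG7
end Aux5
section Aux6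
namespace OG7
open OrientedGraph Finset

variable {V : Type*}

lemma pft_of_large (k : ℕ) (hk : 3 ≤ k) [Fintype V] [DecidableEq V]
    (G : OrientedGraph V) (hG : G.IsTournament)
    (hn : (oRamsey k - 1) * (k-1) + oRamsey k + 2 * oRamsey (k-1) ≤ Fintype.card V) :
    G.HasPerfectFracTiling k := by
  classical
  have hn0 : 0 < Fintype.card V := by
    have := oRamsey_pos (j := k) (by omega)
    omega
  have hk0 : (k:ℝ) ≠ 0 := Nat.cast_ne_zero.mpr (by omega)
  have hnR : (0:ℝ) < Fintype.card V := by exact_mod_cast hn0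
  have hkR : (0:ℝ) < k := by positivity
  set nk : ℝ := (Fintype.card V : ℝ) / k with hnk
  have hnk0 : 0 ≤ nk := by positivity
  let Φ : (Finset V → ℝ) →ₗ[ℝ] (V → ℝ) :=
    { toFun := fun c v => ∑ U ∈ Finset.univ.filter (fun U => v ∈ U), c U
      map_add' := by
        intro c d; funext v
        simp [Finset.sum_add_distrib]
      map_smul' := by
        intro a c; funext v
        simp [Finset.mul_sum] }
  set A : Set (Finset V → ℝ) := {c | (∀ U, 0 ≤ c U) ∧ (∀ U, ¬ G.IsTTCopy k U → c U = 0)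
      ∧ ∑ U : Finset V, c U = nk} with hA
  by_cases hmem : (fun _ => (1:ℝ)) ∈ Φ '' A
  · obtain ⟨c, hcA, hc1⟩ := hmem
    obtain ⟨hc0, hcz, hcs⟩ := hcA
    exact ⟨c, ⟨hc0, hcz, fun v => le_of_eq (congrFun hc1 v)⟩, hcs⟩
  · exfalso
    -- A is convex
    have hAconv : Convex ℝ A := by
      intro c hc d hd a b ha hb hab
      refine ⟨fun U => add_nonneg (mul_nonneg ha (hc.1 U)) (mul_nonneg hb (hd.1 U)),
        fun U hU => by simp [Pi.add_apply, hc.2.1 U hU, hd.2.1 U hU], ?_⟩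
      simp only [Pi.add_apply, Pi.smul_apply, smul_eq_mul]
      rw [Finset.sum_add_distrib, ← Finset.mul_sum, ← Finset.mul_sum, hc.2.2, hd.2.2]
      have : a * nk + b * nk = (a + b) * nk := by ring
      rw [this, hab, one_mul]
    -- A is closed
    have hAclosed : IsClosed A := by
      have hre : A = (⋂ U, {c : Finset V → ℝ | 0 ≤ c U}) ∩
          ((⋂ U ∈ {U | ¬ G.IsTTCopy k U}, {c : Finset V → ℝ | c U = 0}) ∩
            {c : Finset V → ℝ | ∑ U : Finset V, c U = nk}) := by
        ext c
        simp only [hA, Set.mem_setOf_eq, Set.mem_inter_iff, Set.mem_iInter]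
      rw [hre]
      refine IsClosed.inter (isClosed_iInter (fun U =>
        isClosed_le continuous_const (continuous_apply U))) (IsClosed.inter ?_ ?_)
      · exact isClosed_biInter (fun U _ =>
          isClosed_eq (continuous_apply U) continuous_const)
      · exact isClosed_eq (continuous_finset_sum _ (fun U _ => continuous_apply U))
          continuous_const
    -- A is bounded inside a compact box
    have hAsub : A ⊆ Set.Icc (fun _ => (0:ℝ)) (fun _ => nk) := by
      intro c hc
      rw [Set.mem_Icc]
      constructor
      · intro U; exact hc.1 U
      · intro U
        have h1 : c U ≤ ∑ U' : Finset V, c U' :=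
          Finset.single_le_sum (fun U' _ => hc.1 U') (Finset.mem_univ U)
        rw [hc.2.2] at h1
        exact h1
    have hAcomp : IsCompact A := isCompact_Icc.of_isClosed_subset hAclosed hAsub
    have hΦcont : Continuous (Φ : (Finset V → ℝ) → (V → ℝ)) := by
      refine continuous_pi (fun v => ?_)
      exact continuous_finset_sum _ (fun U _ => continuous_apply U)
    have hScomp : IsCompact (Φ '' A) := hAcomp.image hΦcont
    have hSconv : Convex ℝ (Φ '' A) := hAconv.linear_image Φ
    obtain ⟨f, u, hfa, hfu⟩ :=
      geometric_hahn_banach_closed_point hSconv hScomp.isClosed hmem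
    set y : V → ℝ := fun v => f (fun j => if v = j then (1:ℝ) else 0) with hy
    have hf_eval : ∀ x : V → ℝ, f x = ∑ v : V, x v * y v := by
      intro x
      conv_lhs => rw [pi_eq_sum_univ x]
      rw [map_sum]
      exact Finset.sum_congr rfl (fun v _ => by rw [map_smul, smul_eq_mul])
    -- total sum of y exceeds u
    have htotal : u < ∑ v : V, y v := by
      have := hfu
      rw [hf_eval] at this
      simpa using this
    -- each copy has small y-sum
    have hcopysum : ∀ U, G.IsTTCopy k U → nk * (∑ v ∈ U, y v) < u := by
      intro U hU
      set c : Finset V → ℝ := fun T => if T = U then nk else 0 with hc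
      have hcA : c ∈ A := by
        refine ⟨fun T => by rw [hc]; dsimp only; split <;> simp [hnk0], ?_, ?_⟩
        · intro T hT
          rw [hc]; dsimp only
          split
          · rename_i h; exact absurd (h ▸ hU) hT
          · rfl
        · rw [hc]
          simp
      have hlt := hfa _ ⟨c, hcA, rfl⟩
      rw [hf_eval] at hlt
      have hΦc : ∀ v, (Φ c) v = if v ∈ U then nk else 0 := by
        intro v
        show (∑ T ∈ Finset.univ.filter (fun T => v ∈ T), c T) = _
        rw [hc]
        rw [Finset.sum_ite_eq' (Finset.univ.filter (fun T => v ∈ T)) U (fun _ => nk)]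
        simp [Finset.mem_filter]
      have : ∑ v : V, (Φ c) v * y v = nk * ∑ v ∈ U, y v := by
        rw [Finset.sum_congr rfl (fun v _ => by rw [hΦc v, ite_mul, zero_mul])]
        rw [Finset.sum_ite_mem, Finset.univ_inter, Finset.mul_sum]
      rw [this] at hlt
      exact hlt
    -- build the dual witness
    set y' : V → ℝ := fun v => y v - u / Fintype.card V with hy'
    have hcopy' : ∀ U, G.IsTTCopy k U → ∑ v ∈ U, y' v ≤ 0 := by
      intro U hU
      have hcard : U.card = k := copy_card hU
      have hsplit : ∑ v ∈ U, y' v = (∑ v ∈ U, y v) - k * (u / Fintype.card V) := by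
        rw [hy']
        rw [Finset.sum_sub_distrib, Finset.sum_const, hcard, nsmul_eq_mul]
      have h1 := hcopysum U hU
      have he : nk * (∑ v ∈ U, y v) * ((k:ℝ) / Fintype.card V)
          = ∑ v ∈ U, y v := by
        rw [hnk]; field_simp
      have h2 : (∑ v ∈ U, y v) < u * ((k:ℝ) / Fintype.card V) := by
        have hpos : (0:ℝ) < (k:ℝ) / Fintype.card V := by positivity
        calc (∑ v ∈ U, y v) = nk * (∑ v ∈ U, y v) * ((k:ℝ) / Fintype.card V) := he.symm
          _ < u * ((k:ℝ) / Fintype.card V) := by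
              exact mul_lt_mul_of_pos_right h1 hpos
      rw [hsplit]
      have : u * ((k:ℝ) / Fintype.card V) = (k:ℝ) * (u / Fintype.card V) := by ring
      linarith [this ▸ h2]
    have hdual := dual_claim k hk hG hn y' hcopy'
    have hsum' : ∑ v : V, y' v = (∑ v : V, y v) - u := by
      rw [hy', Finset.sum_sub_distrib, Finset.sum_const, Finset.card_univ, nsmul_eq_mul]
      have : (Fintype.card V : ℝ) * (u / Fintype.card V) = u := by
        field_simp
      rw [this]
    rw [hsum'] at hdual
    linarith

end OG7
end Aux6
/-- For `k ≥ 3`, there exists a tournament on `2·r(k-1) - 1` vertices with no perfect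
fractional `T_k`-tiling; hence `trs(k) ≥ 2·r(k-1)`. -/
theorem stmt_7 (k : ℕ) (hk : 3 ≤ k) :
    (∃ G : OrientedGraph (Fin (2 * oRamsey (k - 1) - 1)), G.IsTournament ∧
      ¬ G.HasPerfectFracTiling k) ∧ 2 * oRamsey (k - 1) ≤ trs k := by
  have hr1 : 1 ≤ oRamsey (k-1) := OG7.oRamsey_pos (by omega)
  constructor
  · exact OG7.exists_bad_tournament k hk _ (by omega) le_rfl
  · set N := (oRamsey k - 1) * (k-1) + oRamsey k + 2 * oRamsey (k-1) with hN
    have hrk1 : 1 ≤ oRamsey k := OG7.oRamsey_pos (by omega)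
    have hNmem : N ∈ {n | 0 < n ∧ ∀ G : OrientedGraph (Fin n), G.IsTournament →
        G.HasPerfectFracTiling k} := by
      constructor
      · omega
      · intro G hG
        exact OG7.pft_of_large k hk G hG (by simp [hN])
    refine le_csInf ⟨N, hNmem⟩ ?_
    rintro n ⟨hn0, hnall⟩
    by_contra hc
    push_neg at hc
    obtain ⟨G, hGt, hGbad⟩ := OG7.exists_bad_tournament k hk n hn0 (by omega)
    exact hGbad (hnall G hGt)
end

section
/- For every k ≥ 3 and every n with r(k) ≤ n ≤ (k/(k−2))·(r(k) − 2), there exists a tournament T on n vertices whose maximum fractional T_k-tiling has size at most (n − (r(k) − 2))/2. -/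
open Finset

/-- For `k ≥ 3` and `r(k) ≤ n ≤ (k/(k-2))·(r(k) - 2)`, there is a tournament on `n`
vertices whose maximum fractional `T_k`-tiling has size at most `(n - (r(k) - 2))/2`. -/
theorem stmt_8 (k n : ℕ) (hk : 3 ≤ k) (h1 : oRamsey k ≤ n)
    (h2 : (n : ℝ) ≤ ((k : ℝ) / ((k : ℝ) - 2)) * ((oRamsey k : ℝ) - 2)) :
    ∃ G : OrientedGraph (Fin n), G.IsTournament ∧
      ∀ w : Finset (Fin n) → ℝ, G.IsFracTiling k w →
        ∑ U : Finset (Fin n), w U ≤ ((n : ℝ) - ((oRamsey k : ℝ) - 2)) / 2 := by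
  classical
  have hk3 : (3:ℝ) ≤ (k:ℝ) := by exact_mod_cast hk
  -- r(k) ≥ 2
  have hr2 : 2 ≤ oRamsey k := by
    by_contra h
    push_neg at h
    have hcast : (oRamsey k : ℝ) ≤ 1 := by exact_mod_cast Nat.lt_succ_iff.mp h
    have hpos : (0:ℝ) < (k:ℝ)/((k:ℝ)-2) := div_pos (by linarith) (by linarith)
    have : ((k:ℝ)/((k:ℝ)-2)) * ((oRamsey k : ℝ) - 2) ≤ ((k:ℝ)/((k:ℝ)-2)) * (-1) := by
      apply mul_le_mul_of_nonneg_left (by linarith) hpos.le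
    have hn0 : (0:ℝ) ≤ (n:ℝ) := Nat.cast_nonneg n
    nlinarith
  -- a T_k-free tournament on r(k)-1 vertices
  have hnot : ¬ ∀ G : OrientedGraph (Fin (oRamsey k - 1)), G.IsTournament →
      ∃ U, G.IsTTCopy k U := by
    intro h
    have : oRamsey k ≤ oRamsey k - 1 := Nat.sInf_le h
    omega
  push_neg at hnot
  obtain ⟨H, hHt, hHfree⟩ := hnot
  set m : ℕ := oRamsey k - 2 with hm
  have hmn : m < n := by omega
  have hmr : m < oRamsey k - 1 := by omega
  set π : Fin n → Fin (oRamsey k - 1) :=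
    fun i => if h : i.val < m then ⟨i.val, by omega⟩ else ⟨m, hmr⟩ with hπdef
  have hπ : ∀ a b : Fin n, π a = π b → a ≠ b → m ≤ a.val ∧ m ≤ b.val := by
    intro a b hab hne
    simp only [hπdef] at hab
    split_ifs at hab with ha hb hb
    · exact absurd (Fin.ext (by simpa using hab)) hne
    · simp only [Fin.mk.injEq] at hab; omega
    · simp only [Fin.mk.injEq] at hab; omega
    · omega
  let G : OrientedGraph (Fin n) :=
    { adj := fun u v => (π u = π v ∧ u.val < v.val) ∨ (π u ≠ π v ∧ H.adj (π u) (π v))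
      asymm := by
        rintro u v (⟨he, hlt⟩ | ⟨hne, ha⟩) (⟨he', hlt'⟩ | ⟨hne', ha'⟩)
        · omega
        · exact hne' he.symm
        · exact hne he'.symm
        · exact H.asymm _ _ ha ha' }
  have hGt : G.IsTournament := by
    intro u v huv
    by_cases hp : π u = π v
    · have : u.val ≠ v.val := fun h => huv (Fin.ext h)
      rcases lt_or_gt_of_ne this with h | h
      · exact Or.inl (Or.inl ⟨hp, h⟩)
      · exact Or.inr (Or.inl ⟨hp.symm, h⟩)
    · rcases hHt (π u) (π v) hp with h | h
      · exact Or.inl (Or.inr ⟨hp, h⟩)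
      · exact Or.inr (Or.inr ⟨Ne.symm hp, h⟩)
  set X : Finset (Fin n) := Finset.univ.filter (fun i : Fin n => m ≤ i.val) with hX
  have hXcard : X.card = n - m := by
    have : X = Finset.Ici (⟨m, hmn⟩ : Fin n) := by
      ext i; simp [hX, Fin.le_def]
    rw [this, Fin.card_Ici]
  have hcopy : ∀ U : Finset (Fin n), G.IsTTCopy k U → 2 ≤ (U ∩ X).card := by
    rintro U ⟨f, hmap, hadj⟩
    by_contra hc
    push_neg at hc
    have hmem : ∀ i : Fin k, (f i) ∈ U := by
      intro i; rw [← hmap]; exact Finset.mem_map_of_mem f (Finset.mem_univ i)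
    have hbig : ∀ a b : Fin k, a ≠ b → π (f a) ≠ π (f b) := by
      intro a b hab heq
      have hfa : f a ≠ f b := fun h => hab (f.injective h)
      obtain ⟨h1', h2'⟩ := hπ _ _ heq hfa
      have : 2 ≤ (U ∩ X).card := by
        apply Finset.one_lt_card.mpr
        exact ⟨f a, Finset.mem_inter.mpr ⟨hmem a, by simp [hX, h1']⟩,
               f b, Finset.mem_inter.mpr ⟨hmem b, by simp [hX, h2']⟩, hfa⟩
      omega
    have ginj : Function.Injective (fun i => π (f i)) := by
      intro a b hab
      by_contra hne
      exact hbig a b hne hab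
    have hadj' : ∀ i j : Fin k, i < j → H.adj (π (f i)) (π (f j)) := by
      intro i j hij
      rcases hadj i j hij with ⟨he, _⟩ | ⟨_, ha⟩
      · exact absurd he (hbig i j (ne_of_lt hij))
      · exact ha
    exact hHfree _ ⟨⟨fun i => π (f i), ginj⟩, rfl, hadj'⟩
  refine ⟨G, hGt, ?_⟩
  intro w hw
  obtain ⟨hw0, hwz, hwv⟩ := hw
  have key : 2 * ∑ U : Finset (Fin n), w U ≤ (X.card : ℝ) := by
    have step1 : 2 * ∑ U : Finset (Fin n), w U
        ≤ ∑ U : Finset (Fin n), ((U ∩ X).card : ℝ) * w U := by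
      rw [Finset.mul_sum]
      apply Finset.sum_le_sum
      intro U _
      by_cases h : w U = 0
      · simp [h]
      · have hc := hcopy U (by by_contra hnc; exact h (hwz U hnc))
        have h2' : (2:ℝ) ≤ ((U ∩ X).card : ℝ) := by exact_mod_cast hc
        have h0 := hw0 U
        nlinarith
    have step2 : ∑ U : Finset (Fin n), ((U ∩ X).card : ℝ) * w U
        = ∑ v ∈ X, ∑ U ∈ Finset.univ.filter (fun U => v ∈ U), w U := by
      have hterm : ∀ U : Finset (Fin n),
          ((U ∩ X).card : ℝ) * w U = ∑ v ∈ X, if v ∈ U then w U else 0 := by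
        intro U
        rw [Finset.sum_ite, Finset.sum_const, Finset.sum_const_zero, add_zero,
          nsmul_eq_mul]
        congr 2
        rw [Finset.filter_mem_eq_inter, Finset.inter_comm]
      simp_rw [hterm]
      rw [Finset.sum_comm]
      refine Finset.sum_congr rfl fun v _ => ?_
      rw [Finset.sum_filter]
    calc 2 * ∑ U : Finset (Fin n), w U
        ≤ ∑ U : Finset (Fin n), ((U ∩ X).card : ℝ) * w U := step1
      _ = ∑ v ∈ X, ∑ U ∈ Finset.univ.filter (fun U => v ∈ U), w U := step2
      _ ≤ ∑ _v ∈ X, (1:ℝ) := Finset.sum_le_sum fun v _ => hwv v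
      _ = (X.card : ℝ) := by simp
  have hcast : (X.card : ℝ) = (n : ℝ) - ((oRamsey k : ℝ) - 2) := by
    rw [hXcard, hm]
    push_cast [Nat.cast_sub (show oRamsey k - 2 ≤ n by omega), Nat.cast_sub hr2]
    ring
  rw [hcast] at key
  linarith
end

section
/- For every n divisible by 4, there exists an oriented graph G on n vertices with minimum total degree ⌈11n/12⌉ − 1 that contains no perfect T_4-tiling. -/
open Finset

set_option maxRecDepth 100000
set_option synthInstance.maxSize 2000
set_option synthInstance.maxHeartbeats 1000000
set_option maxHeartbeats 1000000

open Finset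

def pAdjN (a b : ℕ) : Prop := (b + 7 - a) % 7 = 1 ∨ (b + 7 - a) % 7 = 2 ∨ (b + 7 - a) % 7 = 4
instance pAdjN.dec (a b : ℕ) : Decidable (pAdjN a b) := by unfold pAdjN; infer_instance
lemma pAdjN_total : ∀ a < 7, ∀ b < 7, a ≠ b → pAdjN a b ∨ pAdjN b a := by decide
lemma pAdjN_asymm : ∀ a < 7, ∀ b < 7, pAdjN a b → ¬ pAdjN b a := by decide
lemma noT4aux : ∀ a < 7, ∀ b < 7, ∀ c < 7, ∀ d < 7,
    ¬ (pAdjN a b ∧ pAdjN a c ∧ pAdjN a d ∧ pAdjN b c ∧ pAdjN b d ∧ pAdjN c d) := by decide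

/-- class of vertex v: 0 for the big clique X, 1..6 independent sets -/
def classOf (n v : ℕ) : ℕ :=
  if v < n/2 - 1 then 0 else 1 + (v - (n/2 - 1)) / (n/12 + 1)

lemma classOf_lt_seven {n v : ℕ} (hdvd : 4 ∣ n) (hv : v < n) : classOf n v < 7 := by
  unfold classOf
  split
  · omega
  · have hB : 0 < n/12 + 1 := by omega
    have : (v - (n/2 - 1)) / (n/12 + 1) < 6 := by
      rw [Nat.div_lt_iff_lt_mul hB]
      omega
    omega

lemma classOf_eq_zero_iff {n v : ℕ} : classOf n v = 0 ↔ v < n/2 - 1 := by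
  unfold classOf; split <;> simp_all

lemma classOf_eq_one_iff {n v : ℕ} : classOf n v = 1 ↔ n/2 - 1 ≤ v ∧ v < n/2 - 1 + (n/12 + 1) := by
  unfold classOf
  split
  · omega
  · have hB : 0 < n/12 + 1 := by omega
    constructor
    · intro h
      have h0 : (v - (n/2 - 1)) / (n/12 + 1) = 0 := by omega
      rw [Nat.div_eq_zero_iff] at h0
      omega
    · intro h
      have h0 : (v - (n/2 - 1)) / (n/12 + 1) = 0 := by
        rw [Nat.div_eq_zero_iff]; omega
      omega

/-- vertices of class c (c ≠ 0) lie in an interval of length B -/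
lemma classOf_interval {n v c : ℕ} (hc : classOf n v = c) (hc0 : c ≠ 0) :
    n/2 - 1 + (c-1) * (n/12 + 1) ≤ v ∧ v < n/2 - 1 + (c-1) * (n/12 + 1) + (n/12 + 1) := by
  unfold classOf at hc
  split at hc
  · omega
  · set m := n/2 - 1 with hm
    set B := n/12 + 1 with hB
    have hq : (v - m) / B = c - 1 := by omega
    have h1 := Nat.div_add_mod (v - m) B
    have h2 : (v - m) % B < B := Nat.mod_lt _ (by omega)
    rw [hq] at h1
    have hle : ¬ v < m := by assumption
    set p := (c-1) * B with hp
    have hp' : B * (c-1) = p := by rw [hp, Nat.mul_comm]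
    rw [hp'] at h1
    omega

def myAdjP (n : ℕ) (u v : Fin n) : Prop :=
  (classOf n u.val = 0 ∧ classOf n v.val = 0 ∧ u.val < v.val) ∨
  (classOf n u.val ≠ classOf n v.val ∧ pAdjN (classOf n u.val) (classOf n v.val))

instance myAdjP.dec (n : ℕ) (u v : Fin n) : Decidable (myAdjP n u v) := by
  unfold myAdjP; infer_instance

lemma myAdjP_asymm {n : ℕ} (hdvd : 4 ∣ n) (u v : Fin n) :
    myAdjP n u v → ¬ myAdjP n v u := by
  rintro (⟨h1, h2, h3⟩ | ⟨h1, h2⟩) (⟨g1, g2, g3⟩ | ⟨g1, g2⟩)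
  · omega
  · exact g1 (h2.trans h1.symm)
  · exact h1 (g2.trans g1.symm)
  · exact pAdjN_asymm _ (classOf_lt_seven hdvd u.isLt) _ (classOf_lt_seven hdvd v.isLt) h2 g2

/-- cardinality of a val-interval inside Fin n -/
lemma card_interval (n a b : ℕ) (hb : b ≤ n) (hab : a ≤ b) :
    (univ.filter fun v : Fin n => a ≤ v.val ∧ v.val < b).card = b - a := by
  rw [← Nat.card_Ico a b]
  apply Finset.card_bij (fun v _ => v.val)
  · intro v hv; simp only [mem_filter] at hv; exact Finset.mem_Ico.2 hv.2
  · intro x hx y hy h; exact Fin.val_injective h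
  · intro x hx
    rw [Finset.mem_Ico] at hx
    exact ⟨⟨x, by omega⟩, by simp [hx.1, hx.2], rfl⟩

lemma adj_iff_of_class_zero {n : ℕ} (hdvd : 4 ∣ n) {v : Fin n} (hv : classOf n v.val = 0) (u : Fin n) :
    (myAdjP n v u ∨ myAdjP n u v) ↔ u ≠ v := by
  constructor
  · rintro ((⟨h1, h2, h3⟩ | ⟨h1, h2⟩) | (⟨h1, h2, h3⟩ | ⟨h1, h2⟩)) <;> intro he <;> subst he
    · omega
    · exact h1 rfl
    · omega
    · exact h1 rfl
  · intro hne
    by_cases hu : classOf n u.val = 0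
    · have : u.val ≠ v.val := fun h => hne (Fin.val_injective h)
      rcases Nat.lt_or_ge u.val v.val with h | h
      · exact Or.inr (Or.inl ⟨hu, hv, h⟩)
      · exact Or.inl (Or.inl ⟨hv, hu, by omega⟩)
    · have hne' : classOf n v.val ≠ classOf n u.val := by rw [hv]; exact fun h => hu h.symm
      rcases pAdjN_total _ (classOf_lt_seven hdvd v.isLt) _ (classOf_lt_seven hdvd u.isLt) hne' with h | h
      · exact Or.inl (Or.inr ⟨hne', h⟩)
      · exact Or.inr (Or.inr ⟨hne'.symm, h⟩)

lemma adj_iff_of_class_ne_zero {n : ℕ} (hdvd : 4 ∣ n) {v : Fin n} (hv : classOf n v.val ≠ 0) (u : Fin n) :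
    (myAdjP n v u ∨ myAdjP n u v) ↔ classOf n u.val ≠ classOf n v.val := by
  constructor
  · rintro ((⟨h1, h2, h3⟩ | ⟨h1, h2⟩) | (⟨h1, h2, h3⟩ | ⟨h1, h2⟩))
    · exact absurd h1 hv
    · exact fun h => h1 h.symm
    · exact absurd h2 hv
    · exact h1
  · intro hne
    rcases pAdjN_total _ (classOf_lt_seven hdvd v.isLt) _ (classOf_lt_seven hdvd u.isLt)
      (fun h => hne h.symm) with h | h
    · exact Or.inl (Or.inr ⟨fun h' => hne h'.symm, h⟩)
    · exact Or.inr (Or.inr ⟨hne, h⟩)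

lemma class_card_le {n c : ℕ} (hc : c ≠ 0) :
    (univ.filter fun u : Fin n => classOf n u.val = c).card ≤ n/12 + 1 := by
  have h := Finset.card_le_card_of_injOn (f := fun u : Fin n => u.val)
    (s := univ.filter fun u : Fin n => classOf n u.val = c)
    (t := Finset.Ico (n/2-1 + (c-1)*(n/12+1)) (n/2-1 + (c-1)*(n/12+1) + (n/12+1)))
    (by intro u hu
        simp only [coe_filter, mem_filter, mem_univ, true_and, Set.mem_setOf_eq] at hu
        exact Finset.mem_Ico.2 (classOf_interval hu hc))
    (fun a _ b _ h => Fin.val_injective h)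
  simpa using h

lemma class_one_card {n : ℕ} (h4 : 4 ≤ n) :
    (univ.filter fun u : Fin n => classOf n u.val = 1).card = n/12 + 1 := by
  have he : (univ.filter fun u : Fin n => classOf n u.val = 1)
      = univ.filter (fun u : Fin n => n/2-1 ≤ u.val ∧ u.val < (n/2-1) + (n/12+1)) := by
    ext u; simp [classOf_eq_one_iff]
  rw [he, card_interval _ _ _ (by omega) (by omega)]
  omega

lemma class_zero_card {n : ℕ} (h4 : 4 ≤ n) :
    (univ.filter fun u : Fin n => classOf n u.val = 0).card = n/2 - 1 := by
  have he : (univ.filter fun u : Fin n => classOf n u.val = 0)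
      = univ.filter (fun u : Fin n => 0 ≤ u.val ∧ u.val < n/2 - 1) := by
    ext u; simp [classOf_eq_zero_iff]
  rw [he, card_interval _ _ _ (by omega) (by omega)]
  omega

lemma degree_formula {n : ℕ} (hdvd : 4 ∣ n) (G : OrientedGraph (Fin n))
    (hG : G.adj = myAdjP n) (v : Fin n) :
    G.degree v = if classOf n v.val = 0 then n - 1
      else n - (univ.filter fun u : Fin n => classOf n u.val = classOf n v.val).card := by
  have h0 : G.degree v = (univ.filter fun u : Fin n => myAdjP n v u ∨ myAdjP n u v).card := by
    rw [OrientedGraph.degree, hG, Nat.card_eq_fintype_card, Fintype.card_subtype]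
  rw [h0]
  split
  · next hv =>
    have he : (univ.filter fun u : Fin n => myAdjP n v u ∨ myAdjP n u v)
        = univ.filter (fun u => u ≠ v) := by
      apply Finset.filter_congr; intro u _
      exact adj_iff_of_class_zero hdvd hv u
    rw [he, Finset.filter_ne', Finset.card_erase_of_mem (mem_univ v)]
    simp
  · next hv =>
    have he : (univ.filter fun u : Fin n => myAdjP n v u ∨ myAdjP n u v)
        = univ.filter (fun u => ¬ (classOf n u.val = classOf n v.val)) := by
      apply Finset.filter_congr; intro u _
      exact adj_iff_of_class_ne_zero hdvd hv u
    rw [he]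
    have hsum := Finset.card_filter_add_card_filter_not
      (s := (univ : Finset (Fin n))) (p := fun u : Fin n => classOf n u.val = classOf n v.val)
    have hn : (univ : Finset (Fin n)).card = n := by simp
    omega

lemma ceil_eleven (n : ℕ) (h4 : 4 ≤ n) : ⌈(11 * (n:ℚ)) / 12⌉₊ = n - n/12 := by
  rw [Nat.ceil_eq_iff (by omega : n - n/12 ≠ 0)]
  constructor
  · rw [lt_div_iff₀ (by norm_num : (0:ℚ) < 12)]
    exact_mod_cast (show ((n - n/12 - 1) * 12 < 11 * n) by omega)
  · rw [div_le_iff₀ (by norm_num : (0:ℚ) < 12)]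
    exact_mod_cast (show 11 * n ≤ (n - n/12) * 12 by omega)

lemma noT4 : ∀ g : Fin 4 → Fin 7, ¬ (∀ i j : Fin 4, i < j → pAdjN (g i).val (g j).val) := by
  intro g hg
  exact noT4aux (g 0).val (g 0).isLt (g 1).val (g 1).isLt (g 2).val (g 2).isLt (g 3).val (g 3).isLt
    ⟨hg 0 1 (by decide), hg 0 2 (by decide), hg 0 3 (by decide),
     hg 1 2 (by decide), hg 1 3 (by decide), hg 2 3 (by decide)⟩

/-- For every positive `n` divisible by `4`, there is an oriented graph on `n` vertices
with minimum total degree `⌈11n/12⌉ - 1` and no perfect `T_4`-tiling. -/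
theorem stmt_15 (n : ℕ) (hpos : 0 < n) (hdvd : 4 ∣ n) :
    ∃ G : OrientedGraph (Fin n),
      G.minDegree = ⌈(11 * (n : ℚ)) / 12⌉₊ - 1 ∧ ¬ G.HasPerfectTiling 4 := by
  classical
  have h4 : 4 ≤ n := by omega
  refine ⟨⟨myAdjP n, fun u v => myAdjP_asymm hdvd u v⟩, ?_, ?_⟩
  · -- minimum degree
    set G : OrientedGraph (Fin n) := ⟨myAdjP n, fun u v => myAdjP_asymm hdvd u v⟩ with hGdef
    have hmain : G.minDegree = n - (n/12 + 1) := by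
      apply le_antisymm
      · apply Nat.sInf_le
        have hlt : n/2 - 1 < n := by omega
        refine ⟨⟨n/2-1, hlt⟩, ?_⟩
        rw [degree_formula hdvd G rfl]
        have hval : ((⟨n/2-1, hlt⟩ : Fin n) : ℕ) = n/2 - 1 := rfl
        have hcl : classOf n ((⟨n/2-1, hlt⟩ : Fin n) : ℕ) = 1 := by
          rw [hval]; exact classOf_eq_one_iff.2 ⟨le_rfl, by omega⟩
        rw [if_neg (by rw [hcl]; omega)]
        rw [show (univ.filter fun u : Fin n =>
              classOf n u.val = classOf n ((⟨n/2-1, hlt⟩ : Fin n) : ℕ))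
            = univ.filter fun u : Fin n => classOf n u.val = 1 from by rw [hcl]]
        rw [class_one_card h4]
      · have hne : Nonempty (Fin n) := ⟨⟨0, hpos⟩⟩
        apply le_csInf (Set.range_nonempty G.degree)
        rintro d ⟨v, rfl⟩
        rw [degree_formula hdvd G rfl]
        split
        · omega
        · next hv =>
          have := class_card_le (n := n) (c := classOf n v.val) hv
          omega
    rw [hmain, ceil_eleven n h4]
    omega
  · -- no perfect tiling
    rintro ⟨P, hcopy, hdisj, hsup⟩
    set X := univ.filter (fun v : Fin n => classOf n v.val = 0) with hX
    have hXcard : X.card = n/2 - 1 := class_zero_card h4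
    have hcover : ∀ v : Fin n, ∃ U ∈ P, v ∈ U := by
      intro v
      have hv : v ∈ P.sup id := by rw [hsup]; exact mem_univ v
      rwa [Finset.mem_sup] at hv
    have hdisj' : ∀ U ∈ P, ∀ W ∈ P, U ≠ W → Disjoint U W := by
      intro U hU W hW hne
      exact hdisj (Finset.mem_coe.2 hU) (Finset.mem_coe.2 hW) hne
    have hbU : P.biUnion id = univ := by
      ext v; simp only [Finset.mem_biUnion, id, mem_univ, iff_true]
      exact hcover v
    have hcard4 : ∀ U ∈ P, U.card = 4 := by
      intro U hU; obtain ⟨f, hf, -⟩ := hcopy U hU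
      rw [← hf, Finset.card_map, Finset.card_univ, Fintype.card_fin]
    have hn4 : 4 * P.card = n := by
      have h1 : (P.biUnion id).card = ∑ U ∈ P, (id U).card :=
        Finset.card_biUnion (fun x hx y hy hne => hdisj' x hx y hy hne)
      rw [hbU] at h1
      have h2 : ∑ U ∈ P, (id U).card = ∑ U ∈ P, 4 :=
        Finset.sum_congr rfl (fun U hU => hcard4 U hU)
      rw [h2, Finset.sum_const, smul_eq_mul] at h1
      have h3 : (univ : Finset (Fin n)).card = n := by simp
      omega
    have hUX : ∀ U ∈ P, 2 ≤ (U ∩ X).card := by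
      intro U hU
      obtain ⟨f, hfU, hadj⟩ := hcopy U hU
      by_contra hlt
      push_neg at hlt
      have hmemU : ∀ i : Fin 4, f i ∈ U := by
        intro i; rw [← hfU]; exact Finset.mem_map_of_mem f (mem_univ i)
      have hpair : ∀ i j : Fin 4, i ≠ j →
          ¬(classOf n (f i).val = 0 ∧ classOf n (f j).val = 0) := by
        rintro i j hij ⟨h1, h2⟩
        have hsub : ({f i, f j} : Finset (Fin n)) ⊆ U ∩ X := by
          intro x hx; simp only [Finset.mem_insert, Finset.mem_singleton] at hx
          rcases hx with rfl | rfl <;> refine Finset.mem_inter.2 ⟨hmemU _, ?_⟩ <;>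
            simp only [hX, mem_filter, mem_univ, true_and]
          · exact h1
          · exact h2
        have hc2 : ({f i, f j} : Finset (Fin n)).card = 2 := by
          rw [Finset.card_insert_of_notMem (by simp [f.injective.ne hij]),
            Finset.card_singleton]
        have := Finset.card_le_card hsub
        omega
      have hp : ∀ i j : Fin 4, i < j → pAdjN (classOf n (f i).val) (classOf n (f j).val) := by
        intro i j hij
        have h := hadj i j hij
        rcases h with (⟨h1, h2, -⟩ | ⟨-, h2⟩)
        · exact absurd ⟨h1, h2⟩ (hpair i j (ne_of_lt hij))
        · exact h2
      exact noT4 (fun i => ⟨classOf n (f i).val, classOf_lt_seven hdvd (f i).isLt⟩) hp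
    have hXsum : X.card = ∑ U ∈ P, (U ∩ X).card := by
      have h1 : X = P.biUnion (fun U => U ∩ X) := by
        ext v
        simp only [Finset.mem_biUnion]
        constructor
        · intro hv
          obtain ⟨U, hU, hvU⟩ := hcover v
          exact ⟨U, hU, Finset.mem_inter.2 ⟨hvU, hv⟩⟩
        · rintro ⟨U, hU, hv⟩
          exact (Finset.mem_inter.1 hv).2
      conv_lhs => rw [h1]
      exact Finset.card_biUnion (fun x hx y hy hne =>
        Finset.disjoint_left.2 (fun a ha ha' =>
          (Finset.disjoint_left.1 (hdisj' x hx y hy hne))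
            (Finset.mem_inter.1 ha).1 (Finset.mem_inter.1 ha').1))
    have hge : (2 * P.card : ℕ) ≤ X.card := by
      rw [hXsum]
      calc 2 * P.card = ∑ _U ∈ P, 2 := by rw [Finset.sum_const, smul_eq_mul, mul_comm]
        _ ≤ ∑ U ∈ P, (U ∩ X).card := Finset.sum_le_sum hUX
    omega
end

section
/- In the setting of Lemma 5.3's configuration: let K be a tournament partitioned into four parts N^{++}, N^{+-}, N^{-+}, N^{--} with the partial order N^{--} < N^{-+} < N^{++} and N^{--} < N^{+-} < N^{++} (with N^{-+}, N^{+-} incomparable). Suppose every transitive triangle of K contains an edge violating the partial order (an edge between incomparable parts, or an edge between comparable parts directed from the larger to the smaller part). Then for every pair of distinct comparable parts U, W, the set of edges between U and W that satisfy the partial order forms a matching. -/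
open Finset

/-- The strict partial order on the four parts `0 = N⁻⁻`, `1 = N⁻⁺`, `2 = N⁺⁻`, `3 = N⁺⁺`:
`N⁻⁻ < N⁻⁺ < N⁺⁺` and `N⁻⁻ < N⁺⁻ < N⁺⁺`, with `N⁻⁺, N⁺⁻` incomparable. -/
def POlt (a b : Fin 4) : Prop := (a = 0 ∧ b ≠ 0) ∨ (a ≠ 3 ∧ b = 3)

/-- The edge between `u` and `w` (lying in distinct parts) violates the partial order:
its parts are incomparable, or they are comparable and the edge goes downward. -/
def Violates {V : Type*} (K : OrientedGraph V) (lbl : V → Fin 4) (u w : V) : Prop :=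
  lbl u ≠ lbl w ∧
    ¬ ((POlt (lbl u) (lbl w) ∧ K.adj u w) ∨ (POlt (lbl w) (lbl u) ∧ K.adj w u))

/-- If every transitive triangle of the tournament `K` contains an edge violating the
partial order, then for every pair of distinct comparable parts the edges between them
satisfying the partial order form a matching. -/
theorem stmt_17 {V : Type*} (K : OrientedGraph V) (hT : K.IsTournament)
    (lbl : V → Fin 4)
    (hviol : ∀ a b c : V, K.adj a b → K.adj a c → K.adj b c →
      Violates K lbl a b ∨ Violates K lbl a c ∨ Violates K lbl b c) :
    ∀ p q : Fin 4, POlt p q →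
      ∀ u u' w w' : V, lbl u = p → lbl u' = p → lbl w = q → lbl w' = q →
        K.adj u w → K.adj u' w' → (u = u' ↔ w = w') := by
  intro p q hpq u u' w w' hu hu' hw hw' huw hu'w'
  have hpq' : p ≠ q := by
    rintro rfl
    rcases hpq with ⟨h1, h2⟩ | ⟨h1, h2⟩
    exacts [h2 h1, h1 h2]
  have hsat : ∀ a b : V, lbl a = p → lbl b = q → K.adj a b → ¬ Violates K lbl a b := by
    intro a b ha hb hab ⟨_, hn⟩
    exact hn (Or.inl ⟨by rw [ha, hb]; exact hpq, hab⟩)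
  have hsame : ∀ a b : V, lbl a = lbl b → ¬ Violates K lbl a b := by
    intro a b h ⟨h1, _⟩; exact h1 h
  constructor
  · rintro rfl
    by_contra hww'
    rcases hT w w' hww' with h | h
    · rcases hviol u w w' huw hu'w' h with hv | hv | hv
      · exact hsat u w hu hw huw hv
      · exact hsat u w' hu hw' hu'w' hv
      · exact hsame w w' (hw.trans hw'.symm) hv
    · rcases hviol u w' w hu'w' huw h with hv | hv | hv
      · exact hsat u w' hu hw' hu'w' hv
      · exact hsat u w hu hw huw hv
      · exact hsame w' w (hw'.trans hw.symm) hv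
  · rintro rfl
    by_contra huu'
    rcases hT u u' huu' with h | h
    · rcases hviol u u' w h huw hu'w' with hv | hv | hv
      · exact hsame u u' (hu.trans hu'.symm) hv
      · exact hsat u w hu hw huw hv
      · exact hsat u' w hu' hw hu'w' hv
    · rcases hviol u' u w h hu'w' huw with hv | hv | hv
      · exact hsame u' u (hu'.trans hu.symm) hv
      · exact hsat u' w hu' hw hu'w' hv
      · exact hsat u w hu hw huw hv
end

section
/- Let K be a tournament on 11 vertices partitioned into four parts N^{++}, N^{+-}, N^{-+}, N^{--} such that every transitive triangle of K contains an edge that violates the partial order N^{--} < N^{-+} < N^{++}, N^{--} < N^{+-} < N^{++} (with N^{-+}, N^{+-} incomparable). Then every part has at most 3 vertices (so exactly one part has 2 vertices and the other three have 3 vertices), and every part of size 3 induces a cyclic (directed) triangle. -/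
open Finset

/-- If every transitive triangle of a tournament `K` on `11` vertices, partitioned into
four parts, contains an edge violating the partial order, then every part has at most `3`
vertices (so exactly one part has `2` vertices and the others `3`), and every part of
size `3` induces a cyclic triangle. -/
theorem stmt_18 {V : Type*} [Fintype V] [DecidableEq V] (K : OrientedGraph V)
    (hT : K.IsTournament) (hcard : Fintype.card V = 11) (lbl : V → Fin 4)
    (hviol : ∀ a b c : V, K.adj a b → K.adj a c → K.adj b c →
      Violates K lbl a b ∨ Violates K lbl a c ∨ Violates K lbl b c) :
    (∀ p : Fin 4, (Finset.univ.filter (fun v => lbl v = p)).card ≤ 3) ∧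
    (∃! p : Fin 4, (Finset.univ.filter (fun v => lbl v = p)).card = 2) ∧
    (∀ p : Fin 4, (Finset.univ.filter (fun v => lbl v = p)).card = 2 ∨
      (Finset.univ.filter (fun v => lbl v = p)).card = 3) ∧
    (∀ p : Fin 4, (Finset.univ.filter (fun v => lbl v = p)).card = 3 →
      ∃ a b c : V, Finset.univ.filter (fun v => lbl v = p) = {a, b, c} ∧
        K.adj a b ∧ K.adj b c ∧ K.adj c a) := by
  classical
  have noTrans : ∀ a b c : V, lbl a = lbl b → lbl a = lbl c →
      K.adj a b → K.adj a c → K.adj b c → False := by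
    intro a b c hab hac h1 h2 h3
    rcases hviol a b c h1 h2 h3 with ⟨h, _⟩ | ⟨h, _⟩ | ⟨h, _⟩
    · exact h hab
    · exact h hac
    · exact h (by rw [← hab, hac])
  have twoOut : ∀ a x y : V, x ≠ y → lbl a = lbl x → lbl a = lbl y →
      K.adj a x → K.adj a y → False := by
    intro a x y hxy h1 h2 hax hay
    rcases hT x y hxy with h | h
    · exact noTrans a x y h1 h2 hax hay h
    · exact noTrans a y x h2 h1 hay hax h
  have twoIn : ∀ a x y : V, x ≠ y → lbl a = lbl x → lbl a = lbl y →
      K.adj x a → K.adj y a → False := by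
    intro a x y hxy h1 h2 hxa hya
    rcases hT x y hxy with h | h
    · exact noTrans x y a (by rw [← h1, h2]) (by rw [← h1]) h hxa hya
    · exact noTrans y x a (by rw [← h2, h1]) (by rw [← h2]) h hya hxa
  have key : ∀ p : Fin 4, (Finset.univ.filter (fun v => lbl v = p)).card ≤ 3 := by
    intro p
    by_contra hlt
    push_neg at hlt
    set S := Finset.univ.filter (fun v => lbl v = p) with hSdef
    obtain ⟨a, ha⟩ := Finset.card_pos.mp (show 0 < S.card by omega)
    obtain ⟨b, hb⟩ := Finset.card_pos.mp (show 0 < (S.erase a).card by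
      rw [Finset.card_erase_of_mem ha]; omega)
    obtain ⟨c, hc⟩ := Finset.card_pos.mp (show 0 < ((S.erase a).erase b).card by
      rw [Finset.card_erase_of_mem hb, Finset.card_erase_of_mem ha]; omega)
    obtain ⟨d, hd⟩ := Finset.card_pos.mp
      (show 0 < (((S.erase a).erase b).erase c).card by
        rw [Finset.card_erase_of_mem hc, Finset.card_erase_of_mem hb,
          Finset.card_erase_of_mem ha]; omega)
    obtain ⟨hdc, hdb, hda, hdS⟩ :
        d ≠ c ∧ d ≠ b ∧ d ≠ a ∧ d ∈ S := by
      simp only [Finset.mem_erase] at hd; tauto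
    obtain ⟨hcb, hca, hcS⟩ : c ≠ b ∧ c ≠ a ∧ c ∈ S := by
      simp only [Finset.mem_erase] at hc; tauto
    obtain ⟨hba, hbS⟩ : b ≠ a ∧ b ∈ S := by
      simp only [Finset.mem_erase] at hb; tauto
    have la : lbl a = p := (Finset.mem_filter.mp ha).2
    have lb : lbl b = p := (Finset.mem_filter.mp hbS).2
    have lc : lbl c = p := (Finset.mem_filter.mp hcS).2
    have ld : lbl d = p := (Finset.mem_filter.mp hdS).2
    rcases hT a b (Ne.symm hba) with h1 | h1
    · rcases hT a c (Ne.symm hca) with h2 | h2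
      · exact twoOut a b c (Ne.symm hcb) (by rw [la, lb]) (by rw [la, lc]) h1 h2
      · rcases hT a d (Ne.symm hda) with h3 | h3
        · exact twoOut a b d (Ne.symm hdb) (by rw [la, lb]) (by rw [la, ld]) h1 h3
        · exact twoIn a c d (Ne.symm hdc) (by rw [la, lc]) (by rw [la, ld]) h2 h3
    · rcases hT a c (Ne.symm hca) with h2 | h2
      · rcases hT a d (Ne.symm hda) with h3 | h3
        · exact twoOut a c d (Ne.symm hdc) (by rw [la, lc]) (by rw [la, ld]) h2 h3
        · exact twoIn a b d (Ne.symm hdb) (by rw [la, lb]) (by rw [la, ld]) h1 h3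
      · exact twoIn a b c (Ne.symm hcb) (by rw [la, lb]) (by rw [la, lc]) h1 h2
  have cyc : ∀ a b c : V, a ≠ b → a ≠ c → b ≠ c → lbl a = lbl b → lbl a = lbl c →
      K.adj a b → K.adj b c ∧ K.adj c a := by
    intro a b c hab hac hbc h1 h2 hadj
    rcases hT b c hbc with h | h
    · refine ⟨h, ?_⟩
      rcases hT c a (Ne.symm hac) with h' | h'
      · exact h'
      · exact (noTrans a b c h1 h2 hadj h' h).elim
    · exfalso
      rcases hT a c hac with h' | h'
      · exact noTrans a c b h2 h1 h' hadj h
      · exact noTrans c a b h2.symm (by rw [← h2, h1]) h' h hadj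
  have hsum : ∀ q : Fin 4, True := fun _ => trivial
  have hfib : (Finset.univ : Finset V).card =
      ∑ q : Fin 4, (Finset.univ.filter (fun v => lbl v = q)).card :=
    Finset.card_eq_sum_card_fiberwise (fun x _ => Finset.mem_univ (lbl x))
  rw [Finset.card_univ, hcard, Fin.sum_univ_four] at hfib
  have k0 := key 0
  have k1 := key 1
  have k2 := key 2
  have k3 := key 3
  have hall : ∀ q : Fin 4, q = 0 ∨ q = 1 ∨ q = 2 ∨ q = 3 := by
    intro q; fin_cases q <;> decide
  refine ⟨key, ?_, ?_, ?_⟩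
  · have h4 : (Finset.univ.filter (fun v => lbl v = 0)).card = 2 ∨
        (Finset.univ.filter (fun v => lbl v = 1)).card = 2 ∨
        (Finset.univ.filter (fun v => lbl v = 2)).card = 2 ∨
        (Finset.univ.filter (fun v => lbl v = 3)).card = 2 := by omega
    rcases h4 with h | h | h | h
    · exact ⟨0, h, fun q hq => by
        rcases hall q with rfl | rfl | rfl | rfl <;> first | rfl | omega⟩
    · exact ⟨1, h, fun q hq => by
        rcases hall q with rfl | rfl | rfl | rfl <;> first | rfl | omega⟩
    · exact ⟨2, h, fun q hq => by
        rcases hall q with rfl | rfl | rfl | rfl <;> first | rfl | omega⟩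
    · exact ⟨3, h, fun q hq => by
        rcases hall q with rfl | rfl | rfl | rfl <;> first | rfl | omega⟩
  · intro p
    rcases hall p with rfl | rfl | rfl | rfl <;> omega
  · intro p hp
    obtain ⟨a, b, c, hab, hac, hbc, hset⟩ := Finset.card_eq_three.mp hp
    have haS : a ∈ Finset.univ.filter (fun v => lbl v = p) := by
      rw [hset]; simp
    have hbS : b ∈ Finset.univ.filter (fun v => lbl v = p) := by
      rw [hset]; simp
    have hcS : c ∈ Finset.univ.filter (fun v => lbl v = p) := by
      rw [hset]; simp
    have la : lbl a = p := (Finset.mem_filter.mp haS).2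
    have lb : lbl b = p := (Finset.mem_filter.mp hbS).2
    have lc : lbl c = p := (Finset.mem_filter.mp hcS).2
    rcases hT a b hab with h | h
    · obtain ⟨h1, h2⟩ := cyc a b c hab hac hbc (by rw [la, lb]) (by rw [la, lc]) h
      exact ⟨a, b, c, hset, h, h1, h2⟩
    · obtain ⟨h1, h2⟩ := cyc b a c (Ne.symm hab) hbc hac (by rw [la, lb])
        (by rw [lb, lc]) h
      exact ⟨b, a, c, by rw [hset]; ext x; simp; tauto, h, h1, h2⟩
end
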